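/- arXiv:2011.08643 — 3 statements merged into one kernel-verified Lean document; each statement's English description precedes it below -/
import Mathlib

section
/- Let s, t be coprime integers greater than 1 and let κ = κ_{s,t} be the largest (s,t)-core. If λ is a partition with |λ| = |κ| + st and core_s(λ) = core_t(λ) = κ, then λ is obtained by adding a single rim st-hook to κ; equivalently, β(λ) is obtained from β(κ) by replacing a single element b with b + st. -/
/-- A partition, given as a weakly decreasing finitely-supported sequence of
natural numbers (`parts 0` is the first part). -/
structure Partition' where
  parts : ℕ →₀ ℕ
  antitone : ∀ ⦃i j : ℕ⦄, i ≤ j → parts j ≤ parts i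

namespace Partition'

/-- The size `|λ|` of a partition. -/
def size (l : Partition') : ℕ := l.parts.sum fun _ v => v

/-- The beta-set `β(λ) = { λ_r − r : r ≥ 1 }` (here 0-indexed). -/
def betaSet (l : Partition') : Set ℤ :=
  Set.range fun r : ℕ => (l.parts r : ℤ) - (r + 1)

/-- `RemoveHook h l m` : `m` is obtained from `l` by removing a rim `h`-hook;
in beta-set terms, an element `b` of `β(l)` is replaced by `b − h ∉ β(l)`. -/
def RemoveHook (h : ℕ) (l m : Partition') : Prop :=
  ∃ b : ℤ, b ∈ l.betaSet ∧ b - (h : ℤ) ∉ l.betaSet ∧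
    m.betaSet = insert (b - (h : ℤ)) (l.betaSet \ {b})

/-- `l` is an `s`-core: no rim `s`-hook can be removed. -/
def IsCore (s : ℕ) (l : Partition') : Prop := ∀ m : Partition', ¬ RemoveHook s l m

/-- `c` is the `s`-core of `l`: it is obtained from `l` by repeatedly removing
rim `s`-hooks, and is itself an `s`-core. -/
def HasCore (s : ℕ) (l c : Partition') : Prop :=
  Relation.ReflTransGen (RemoveHook s) l c ∧ IsCore s c

/-- `IsConj l m` : `m` is the conjugate partition of `l`. -/
def IsConj (l m : Partition') : Prop :=
  ∀ r : ℕ, m.parts r = Set.ncard {c : ℕ | r + 1 ≤ l.parts c}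

end Partition'

/-- The region `U_x = { x + as + bt : a, b > 0 }`. -/
def UpSet (s t : ℕ) (x : ℤ) : Set ℤ :=
  {n : ℤ | ∃ a b : ℕ, 0 < a ∧ 0 < b ∧ n = x + (a : ℤ) * s + (b : ℤ) * t}

/-- The region `L_x = { x − as − bt : a, b ≥ 0 }`. -/
def LowSet (s t : ℕ) (x : ℤ) : Set ℤ :=
  {n : ℤ | ∃ a b : ℕ, n = x - (a : ℤ) * s - (b : ℤ) * t}

/-- `x` is a pinch-point for `l` : `L_x ⊆ β(l)` and `β(l) ∩ U_x = ∅`. -/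
def PinchPoint (s t : ℕ) (x : ℤ) (l : Partition') : Prop :=
  LowSet s t x ⊆ l.betaSet ∧ l.betaSet ∩ UpSet s t x = ∅

/-- The generator `w_i` of the affine symmetric group `W_s` in its level-`t`
action on `ℤ` : `n ↦ n + t` if `n ≡ (i−1)t − (s−1)(t−1)/2 (mod s)`,
`n ↦ n − t` if `n ≡ it − (s−1)(t−1)/2 (mod s)`, and `n ↦ n` otherwise. -/
def wgen (s t : ℕ) (i : ℤ) : ℤ → ℤ := fun n =>
  if (s : ℤ) ∣ (n + ((s : ℤ) - 1) * ((t : ℤ) - 1) / 2 - (i - 1) * t) then n + t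
  else if (s : ℤ) ∣ (n + ((s : ℤ) - 1) * ((t : ℤ) - 1) / 2 - i * t) then n - t
  else n

/-- The monoid of maps `ℤ → ℤ` generated by the `wgen s t i`.  Since each
generator is an involution, this is the image of the level-`t` action
of the affine symmetric group `W_s` on `ℤ`. -/
def WMon (s t : ℕ) : Submonoid (Function.End ℤ) :=
  Submonoid.closure {f | ∃ i : ℤ, f = wgen s t i}

/-- `l` is `(s,t)`-minimal: no partition of smaller size has the same
`s`-core and `t`-core. -/
def MinimalPart (s t : ℕ) (l : Partition') : Prop :=
  ∀ (m σ τ : Partition'), Partition'.HasCore s l σ → Partition'.HasCore t l τ →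
    Partition'.HasCore s m σ → Partition'.HasCore t m τ → l.size ≤ m.size

namespace Stmt7

open Finset


open Finset

/-- the beta sequence -/
def fseq (l : Partition') (r : ℕ) : ℤ := (l.parts r : ℤ) - (r + 1)

lemma fseq_strictAnti (l : Partition') : StrictAnti (fseq l) := by
  intro i j hij
  have h1 : l.parts j ≤ l.parts i := l.antitone hij.le
  simp only [fseq]
  have : (i : ℤ) < j := by exact_mod_cast hij
  have h2 : (l.parts j : ℤ) ≤ l.parts i := by exact_mod_cast h1
  linarith

lemma fseq_inj (l : Partition') : Function.Injective (fseq l) :=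
  (fseq_strictAnti l).injective

lemma beta_eq_range (l : Partition') : l.betaSet = Set.range (fseq l) := rfl

lemma parts_bound (l : Partition') : ∃ N : ℕ, ∀ r, N ≤ r → l.parts r = 0 := by
  refine ⟨(l.parts.support.sup id) + 1, fun r hr => ?_⟩
  by_contra h
  have : r ∈ l.parts.support := Finsupp.mem_support_iff.mpr h
  have := Finset.le_sup (f := id) this
  simp only [id] at this
  omega

/-- truncation of the beta set -/
lemma beta_trunc (l : Partition') (N : ℕ) (hN : ∀ r, N ≤ r → l.parts r = 0) :
    l.betaSet ∩ {x : ℤ | -(N : ℤ) ≤ x} = ↑((Finset.range N).image (fseq l)) := by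
  ext x
  simp only [Set.mem_inter_iff, Set.mem_setOf_eq, Finset.coe_image, Set.mem_image,
    Finset.mem_coe, Finset.mem_range, beta_eq_range, Set.mem_range]
  constructor
  · rintro ⟨⟨r, rfl⟩, hx⟩
    refine ⟨r, ?_, rfl⟩
    by_contra hr
    push_neg at hr
    have h0 : l.parts r = 0 := hN r hr
    simp only [fseq, h0, Nat.cast_zero] at hx
    have : (N : ℤ) ≤ r := by exact_mod_cast hr
    linarith
  · rintro ⟨r, hr, rfl⟩
    refine ⟨⟨r, rfl⟩, ?_⟩
    simp only [fseq]
    have : (r : ℤ) < (N : ℤ) := by exact_mod_cast hr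
    have : (0 : ℤ) ≤ l.parts r := by positivity
    linarith

lemma size_eq_sum (l : Partition') (N : ℕ) (hN : ∀ r, N ≤ r → l.parts r = 0) :
    (l.size : ℤ) = ∑ r ∈ Finset.range N, (l.parts r : ℤ) := by
  have hsub : l.parts.support ⊆ Finset.range N := by
    intro r hr
    simp only [Finset.mem_range]
    by_contra h
    exact (Finsupp.mem_support_iff.mp hr) (hN r (by omega))
  have : l.size = ∑ r ∈ Finset.range N, l.parts r :=
    Finsupp.sum_of_support_subset _ hsub _ (fun i _ => rfl)
  rw [this]
  push_cast
  ring

lemma sum_fseq (l : Partition') (N : ℕ) (hN : ∀ r, N ≤ r → l.parts r = 0) :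
    ∑ r ∈ Finset.range N, fseq l r = (l.size : ℤ) - ∑ r ∈ Finset.range N, ((r : ℤ) + 1) := by
  rw [size_eq_sum l N hN]
  rw [← Finset.sum_sub_distrib]
  rfl


/-- Lemma R1: removing a rim h-hook decreases size by h. -/
lemma removeHook_size {h : ℕ} {l m : Partition'} (hlm : Partition'.RemoveHook h l m) :
    (m.size : ℤ) = (l.size : ℤ) - h := by
  obtain ⟨b, hb, hnb, hmb⟩ := hlm
  obtain ⟨Nl, hNl⟩ := parts_bound l
  obtain ⟨Nm, hNm⟩ := parts_bound m
  obtain ⟨i, hi⟩ : ∃ i, fseq l i = b := hb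
  obtain ⟨j, hj⟩ : ∃ j, fseq m j = b - h := by
    have : b - (h:ℤ) ∈ m.betaSet := by rw [hmb]; exact Set.mem_insert _ _
    exact this
  have hb : b ∈ l.betaSet := ⟨i, hi⟩
  set N := max (max Nl Nm) (max (i+1) (j+1)) with hN
  have hNl' : ∀ r, N ≤ r → l.parts r = 0 := fun r hr => hNl r (by omega)
  have hNm' : ∀ r, N ≤ r → m.parts r = 0 := fun r hr => hNm r (by omega)
  have hiN : i < N := by omega
  have hjN : j < N := by omega
  -- b and b-h are ≥ -N
  have hbge : -(N:ℤ) ≤ b := by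
    rw [← hi]; simp only [fseq]
    have : (i : ℤ) < (N : ℤ) := by exact_mod_cast hiN
    have : (0:ℤ) ≤ l.parts i := by positivity
    omega
  have hbhge : -(N:ℤ) ≤ b - h := by
    rw [← hj]; simp only [fseq]
    have : (j : ℤ) < (N : ℤ) := by exact_mod_cast hjN
    have : (0:ℤ) ≤ m.parts j := by positivity
    omega
  set Al := (Finset.range N).image (fseq l) with hAl
  set Am := (Finset.range N).image (fseq m) with hAm
  have hAlc : ↑Al = l.betaSet ∩ {x : ℤ | -(N:ℤ) ≤ x} := (beta_trunc l N hNl').symm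
  have hAmc : ↑Am = m.betaSet ∩ {x : ℤ | -(N:ℤ) ≤ x} := (beta_trunc m N hNm').symm
  have hbAl : b ∈ Al := by
    have : b ∈ (↑Al : Set ℤ) := by rw [hAlc]; exact ⟨hb, hbge⟩
    exact_mod_cast this
  have hbhAl : b - (h:ℤ) ∉ Al := by
    intro hmem
    have : b - (h:ℤ) ∈ (↑Al : Set ℤ) := by exact_mod_cast hmem
    rw [hAlc] at this
    exact hnb this.1
  -- Am = insert (b-h) (Al.erase b)
  have key : Am = insert (b - (h:ℤ)) (Al.erase b) := by
    apply Finset.coe_injective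
    rw [Finset.coe_insert, Finset.coe_erase, hAmc, hAlc, hmb]
    ext x
    simp only [Set.mem_inter_iff, Set.mem_insert_iff, Set.mem_diff, Set.mem_singleton_iff,
      Set.mem_setOf_eq]
    constructor
    · rintro ⟨hx1 | ⟨hx1, hx2⟩, hx3⟩
      · left; exact hx1
      · right; exact ⟨⟨hx1, hx3⟩, hx2⟩
    · rintro (rfl | ⟨⟨hx1, hx3⟩, hx2⟩)
      · exact ⟨Or.inl rfl, hbhge⟩
      · exact ⟨Or.inr ⟨hx1, hx2⟩, hx3⟩
  -- sums
  have hsl : ∑ x ∈ Al, x = ∑ r ∈ Finset.range N, fseq l r := by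
    rw [hAl]; exact Finset.sum_image (fun a _ c _ hac => fseq_inj l hac)
  have hsm : ∑ x ∈ Am, x = ∑ r ∈ Finset.range N, fseq m r := by
    rw [hAm]; exact Finset.sum_image (fun a _ c _ hac => fseq_inj m hac)
  have hsum : ∑ x ∈ Am, x = (∑ x ∈ Al, x) - h := by
    rw [key, Finset.sum_insert (fun hmem => hbhAl (Finset.mem_of_mem_erase hmem)),
      Finset.sum_erase_eq_sub hbAl]
    ring
  have e1 := sum_fseq l N hNl'
  have e2 := sum_fseq m N hNm'
  rw [← hsl] at e1
  rw [← hsm] at e2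
  have := hsum
  rw [e1] at this
  rw [e2] at this
  linarith [this]



open Finset

lemma image_erase_injOn {f : ℤ × ℤ → ℤ} {R : Finset (ℤ × ℤ)} (hinj : Set.InjOn f ↑R)
    {r : ℤ × ℤ} (hr : r ∈ R) : (R.erase r).image f = (R.image f).erase (f r) := by
  ext x
  simp only [Finset.mem_image, Finset.mem_erase]
  constructor
  · rintro ⟨y, ⟨hyr, hyR⟩, rfl⟩
    exact ⟨fun he => hyr (hinj (by exact_mod_cast hyR) (by exact_mod_cast hr) he), y, hyR, rfl⟩
  · rintro ⟨hxne, y, hyR, rfl⟩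
    exact ⟨y, ⟨fun e => hxne (by rw [e]), hyR⟩, rfl⟩

lemma injOn_insert_pair {f : ℤ × ℤ → ℤ} {S : Finset (ℤ × ℤ)} (hinj : Set.InjOn f ↑S)
    {r : ℤ × ℤ} (hf : ∀ x ∈ S, f x ≠ f r) : Set.InjOn f ↑(insert r S) := by
  intro x hx y hy hxy
  simp only [Finset.coe_insert, Set.mem_insert_iff, Finset.mem_coe] at hx hy
  rcases hx with rfl | hx <;> rcases hy with rfl | hy
  · rfl
  · exact absurd hxy.symm (hf y hy)
  · exact absurd hxy (hf x hx)
  · exact hinj hx hy hxy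

lemma injOn_of_subset {f : ℤ × ℤ → ℤ} {S T : Finset (ℤ × ℤ)} (hinj : Set.InjOn f ↑T)
    (hsub : S ⊆ T) : Set.InjOn f ↑S := hinj.mono (by exact_mod_cast hsub)

/-- The chain invariant: along a chain of rim h-hook removals from `p` down to `q`,
the beta set of `p` is that of `q` with beads from `E = R.image snd` replaced by
beads `D = R.image fst`, each pair moved up by a positive multiple of `h`, with
total displacement `h * n` matching the size difference. -/
lemma chainInv {h : ℕ} (hh : 0 < h) {p q : Partition'}
    (hpq : Relation.ReflTransGen (Partition'.RemoveHook h) p q) :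
    ∃ (R : Finset (ℤ × ℤ)) (n : ℕ),
      p.betaSet = (q.betaSet \ ↑(R.image Prod.snd)) ∪ ↑(R.image Prod.fst) ∧
      (↑(R.image Prod.fst) : Set ℤ) ∩ q.betaSet = ∅ ∧
      (↑(R.image Prod.snd) : Set ℤ) ⊆ q.betaSet ∧
      Set.InjOn Prod.fst (R : Set (ℤ × ℤ)) ∧ Set.InjOn Prod.snd (R : Set (ℤ × ℤ)) ∧
      (∀ r ∈ R, ∃ a : ℕ, 0 < a ∧ r.1 - r.2 = h * a) ∧
      (∑ r ∈ R, (r.1 - r.2)) = h * n ∧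
      (p.size : ℤ) = q.size + h * n := by
  induction hpq using Relation.ReflTransGen.head_induction_on with
  | refl =>
    refine ⟨∅, 0, by simp, by simp, by simp, by simp, by simp, by simp, by simp, by simp⟩
  | head hstep hchain ih =>
    rename_i pp pmid

    obtain ⟨R, n, ih1, ih2, ih3, ih4f, ih4s, ih5, ih6, ih7⟩ := ih
    obtain ⟨b, hbp, hnbp, hp'β⟩ := hstep
    have hsize : (pmid.size : ℤ) = (pp.size : ℤ) - h := removeHook_size ⟨b, hbp, hnbp, hp'β⟩
    have hbne : b - (h : ℤ) ≠ b := by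
      intro e
      have : (h : ℤ) = 0 := by linarith [e]
      simp at this; omega
    -- basic membership facts
    have hbnp' : b ∉ pmid.betaSet := by
      rw [hp'β]
      rintro (h1 | ⟨_, h2⟩)
      · exact hbne h1.symm
      · exact h2 rfl
    have hbhp' : b - (h : ℤ) ∈ pmid.betaSet := by rw [hp'β]; exact Set.mem_insert _ _
    have hpβ : pp.betaSet = insert b (pmid.betaSet \ {b - (h : ℤ)}) := by
      rw [hp'β]; ext x
      simp only [Set.mem_insert_iff, Set.mem_diff, Set.mem_singleton_iff]
      constructor
      · intro hx
        by_cases hxb : x = b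
        · left; exact hxb
        · right
          refine ⟨Or.inr ⟨hx, hxb⟩, ?_⟩
          rintro rfl; exact hnbp hx
      · rintro (rfl | ⟨(h1 | ⟨h1, _⟩), h2⟩)
        · exact hbp
        · exact absurd h1 h2
        · exact h1
    set A := q.betaSet with hA
    set D := R.image Prod.fst with hD
    set E := R.image Prod.snd with hE
    -- D is disjoint from A
    have hDnA : ∀ x ∈ D, x ∉ A := by
      intro x hx hxA
      have : x ∈ (↑D : Set ℤ) ∩ A := ⟨by exact_mod_cast hx, hxA⟩
      rw [ih2] at this
      exact this
    have hEA : ∀ x ∈ E, x ∈ A := fun x hx => ih3 (by exact_mod_cast hx)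
    -- b is not in D
    have hbD : b ∉ D := by
      intro hbD
      apply hbnp'
      rw [ih1]
      exact Or.inr (by exact_mod_cast hbD)
    -- b ∈ A ↔ b ∈ E
    have hbAE : b ∈ A → b ∈ E := by
      intro hbA
      by_contra hbE
      apply hbnp'
      rw [ih1]
      exact Or.inl ⟨hbA, fun hc => hbE (by exact_mod_cast hc)⟩
    -- b - h in D or in A \ E
    have hbhDE : (b - (h:ℤ)) ∈ D ∨ ((b - (h:ℤ)) ∈ A ∧ (b - (h:ℤ)) ∉ E) := by
      have := hbhp'
      rw [ih1] at this
      rcases this with h1 | h1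
      · right; exact ⟨h1.1, fun hc => h1.2 (by exact_mod_cast hc)⟩
      · left; exact_mod_cast h1
    -- the size conjunct, common to all cases
    have hsz : (pp.size : ℤ) = q.size + h * ((n+1 : ℕ) : ℤ) := by push_cast; linarith
    by_cases hbE : b ∈ E
    · obtain ⟨r1, hr1R, hr1b⟩ : ∃ r ∈ R, r.2 = b := by
        rw [hE] at hbE; simpa using hbE
      have hbA : b ∈ A := hEA b hbE
      have hd1D : r1.1 ∈ D := by rw [hD]; exact Finset.mem_image_of_mem _ hr1R
      obtain ⟨a1, ha1, ha1e⟩ := ih5 r1 hr1R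
      rcases hbhDE with hbhD | ⟨hbhA, hbhE⟩
      · -- CASE 4 : b ∈ E, b - h ∈ D
        obtain ⟨r0, hr0R, hr0b⟩ : ∃ r ∈ R, r.1 = b - (h:ℤ) := by
          rw [hD] at hbhD; simpa using hbhD
        obtain ⟨a0, ha0, ha0e⟩ := ih5 r0 hr0R
        have hr01 : r0 ≠ r1 := by
          intro e
          subst e
          rw [hr0b, hr1b] at ha0e
          have h1 : (0:ℤ) < h := by exact_mod_cast hh
          have h2 : (1:ℤ) ≤ a0 := by exact_mod_cast ha0
          nlinarith
        have hd1ne : r1.1 ≠ b - (h:ℤ) := by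
          intro hc
          apply hr01
          exact ih4f (by exact_mod_cast hr0R) (by exact_mod_cast hr1R) (by rw [hr0b, hc])
        have he0E : r0.2 ∈ E := by rw [hE]; exact Finset.mem_image_of_mem _ hr0R
        have he0b : r0.2 ≠ b := by
          intro hc
          apply hr01
          exact ih4s (by exact_mod_cast hr0R) (by exact_mod_cast hr1R) (by rw [hc, hr1b])
        have hr0er1 : r0 ∈ R.erase r1 := Finset.mem_erase.mpr ⟨hr01, hr0R⟩
        have hbhA' : b - (h:ℤ) ∉ A := fun hc => hDnA _ hbhD hc
        have hnew : (r1.1, r0.2) ∉ (R.erase r1).erase r0 := by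
          intro hc
          have hcR : (r1.1, r0.2) ∈ R := Finset.mem_of_mem_erase (Finset.mem_of_mem_erase hc)
          have heq : (r1.1, r0.2) = r1 := ih4f (by exact_mod_cast hcR) (by exact_mod_cast hr1R) rfl
          exact (Finset.ne_of_mem_erase (Finset.mem_of_mem_erase hc)) heq
        have h1 : (insert (r1.1, r0.2) ((R.erase r1).erase r0)).image Prod.fst
            = D.erase (b - (h:ℤ)) := by
          rw [Finset.image_insert,
            image_erase_injOn (injOn_of_subset ih4f (Finset.erase_subset _ _)) hr0er1,
            image_erase_injOn ih4f hr1R, ← hD, hr0b, Finset.erase_right_comm]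
          exact Finset.insert_erase (Finset.mem_erase.mpr ⟨hd1ne, hd1D⟩)
        have h2 : (insert (r1.1, r0.2) ((R.erase r1).erase r0)).image Prod.snd
            = E.erase b := by
          rw [Finset.image_insert,
            image_erase_injOn (injOn_of_subset ih4s (Finset.erase_subset _ _)) hr0er1,
            image_erase_injOn ih4s hr1R, ← hE, hr1b]
          exact Finset.insert_erase (Finset.mem_erase.mpr ⟨he0b, he0E⟩)
        refine ⟨insert (r1.1, r0.2) ((R.erase r1).erase r0), n+1, ?_, ?_, ?_, ?_, ?_, ?_, ?_, hsz⟩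
        · rw [h1, h2, hpβ, ih1]
          ext x
          simp only [Finset.coe_insert, Finset.coe_erase, Set.mem_insert_iff, Set.mem_union,
            Set.mem_diff, Set.mem_singleton_iff, Finset.mem_coe, Finset.mem_erase]
          constructor
          · rintro (rfl | ⟨(⟨h3, h4⟩ | h3), h5⟩)
            · exact Or.inl ⟨hbA, fun hc => hc.2 rfl⟩
            · exact Or.inl ⟨h3, fun hc => h4 hc.1⟩
            · exact Or.inr ⟨h3, h5⟩
          · rintro (⟨h3, h4⟩ | ⟨h3, h4⟩)
            · by_cases hxb : x = b
              · exact Or.inl hxb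
              · have hxE : x ∉ E := fun hc => h4 ⟨hc, hxb⟩
                exact Or.inr ⟨Or.inl ⟨h3, hxE⟩, fun hc => hbhA' (hc ▸ h3)⟩
            · exact Or.inr ⟨Or.inr h3, h4⟩
        · rw [h1]
          apply Set.eq_empty_iff_forall_notMem.mpr
          rintro x ⟨hx1, hx2⟩
          simp only [Finset.coe_erase, Set.mem_diff, Finset.mem_coe, Set.mem_singleton_iff] at hx1
          exact hDnA x hx1.1 hx2
        · rw [h2]
          intro x hx
          simp only [Finset.coe_erase, Set.mem_diff, Finset.mem_coe, Set.mem_singleton_iff] at hx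
          exact hEA x hx.1
        · refine injOn_insert_pair
            (injOn_of_subset ih4f ((Finset.erase_subset _ _).trans (Finset.erase_subset _ _))) ?_
          intro x hx hc
          have hx' := Finset.mem_of_mem_erase (Finset.mem_of_mem_erase hx)
          have heq : x = r1 := ih4f (by exact_mod_cast hx') (by exact_mod_cast hr1R) hc
          exact (Finset.ne_of_mem_erase (Finset.mem_of_mem_erase hx)) heq
        · refine injOn_insert_pair
            (injOn_of_subset ih4s ((Finset.erase_subset _ _).trans (Finset.erase_subset _ _))) ?_
          intro x hx hc
          have hx' := Finset.mem_of_mem_erase (Finset.mem_of_mem_erase hx)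
          have heq : x = r0 := ih4s (by exact_mod_cast hx') (by exact_mod_cast hr0R) hc
          exact (Finset.ne_of_mem_erase hx) heq
        · intro r hr
          rcases Finset.mem_insert.mp hr with rfl | hr
          · refine ⟨a1 + a0 + 1, by omega, ?_⟩
            show r1.1 - r0.2 = (h:ℤ) * ((a1 + a0 + 1 : ℕ) : ℤ)
            have h3 := ha1e; have h4 := ha0e
            rw [hr1b] at h3; rw [hr0b] at h4
            push_cast
            linarith
          · exact ih5 r (Finset.mem_of_mem_erase (Finset.mem_of_mem_erase hr))
        · rw [Finset.sum_insert hnew, Finset.sum_erase_eq_sub hr0er1,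
            Finset.sum_erase_eq_sub hr1R, ih6]
          show r1.1 - r0.2 + ((h:ℤ) * n - (r1.1 - r1.2) - (r0.1 - r0.2)) = (h:ℤ) * ((n + 1 : ℕ) : ℤ)
          rw [hr1b, hr0b]
          push_cast
          linarith
      · -- CASE 3 : b ∈ E, b - h ∈ A \ E
        have hbhD : b - (h:ℤ) ∉ D := fun hc => hDnA _ hc hbhA
        have hnew : (r1.1, b - (h:ℤ)) ∉ R.erase r1 := by
          intro hc
          exact hbhE (by rw [hE]; exact Finset.mem_image_of_mem _ (Finset.mem_of_mem_erase hc))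

        have h1 : (insert (r1.1, b - (h:ℤ)) (R.erase r1)).image Prod.fst = D := by
          rw [Finset.image_insert, image_erase_injOn ih4f hr1R, ← hD]
          exact Finset.insert_erase hd1D
        have h2 : (insert (r1.1, b - (h:ℤ)) (R.erase r1)).image Prod.snd
            = insert (b - (h:ℤ)) (E.erase b) := by
          rw [Finset.image_insert, image_erase_injOn ih4s hr1R, ← hE, hr1b]
        refine ⟨insert (r1.1, b - (h:ℤ)) (R.erase r1), n+1, ?_, ?_, ?_, ?_, ?_, ?_, ?_, hsz⟩
        · rw [h1, h2, hpβ, ih1]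
          ext x
          simp only [Finset.coe_insert, Finset.coe_erase, Set.mem_insert_iff, Set.mem_union,
            Set.mem_diff, Set.mem_singleton_iff, Finset.mem_coe, Finset.mem_erase]
          constructor
          · rintro (rfl | ⟨(⟨h3, h4⟩ | h3), h5⟩)
            · refine Or.inl ⟨hbA, ?_⟩
              rintro (hc | ⟨_, hc⟩)
              · exact hbne hc.symm
              · exact hc rfl
            · refine Or.inl ⟨h3, ?_⟩
              rintro (hc | ⟨hc, _⟩)
              · exact h5 hc
              · exact h4 hc
            · exact Or.inr h3
          · rintro (⟨h3, h4⟩ | h3)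
            · by_cases hxb : x = b
              · exact Or.inl hxb
              · have hxE : x ∉ E := fun hc => h4 (Or.inr ⟨hc, hxb⟩)
                have hxbh : x ≠ b - (h:ℤ) := fun hc => h4 (Or.inl hc)
                exact Or.inr ⟨Or.inl ⟨h3, hxE⟩, hxbh⟩
            · exact Or.inr ⟨Or.inr h3, fun hc => hbhD (hc ▸ h3)⟩
        · rw [h1]; exact ih2
        · rw [h2]
          intro x hx
          simp only [Finset.coe_insert, Set.mem_insert_iff, Finset.mem_coe] at hx
          rcases hx with rfl | hx
          · exact hbhA
          · exact hEA x (Finset.mem_of_mem_erase hx)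
        · refine injOn_insert_pair (injOn_of_subset ih4f (Finset.erase_subset _ _)) ?_
          intro x hx hc
          have hx' := Finset.mem_of_mem_erase hx
          have heq : x = r1 := ih4f (by exact_mod_cast hx') (by exact_mod_cast hr1R) hc
          exact (Finset.ne_of_mem_erase hx) heq
        · refine injOn_insert_pair (injOn_of_subset ih4s (Finset.erase_subset _ _)) ?_
          intro x hx hc
          apply hbhE
          rw [hE]
          have hc' : x.2 = b - (h:ℤ) := hc
          rw [← hc']
          exact Finset.mem_image_of_mem Prod.snd (Finset.mem_of_mem_erase hx)
        · intro r hr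
          rcases Finset.mem_insert.mp hr with rfl | hr
          · refine ⟨a1 + 1, by omega, ?_⟩
            have h3 := ha1e
            rw [hr1b] at h3
            show r1.1 - (b - (h:ℤ)) = (h:ℤ) * ((a1 + 1 : ℕ) : ℤ)
            push_cast
            linarith
          · exact ih5 r (Finset.mem_of_mem_erase hr)
        · rw [Finset.sum_insert hnew, Finset.sum_erase_eq_sub hr1R, ih6]
          have h3 := ha1e
          rw [hr1b] at h3
          show r1.1 - (b - (h:ℤ)) + ((h:ℤ) * n - (r1.1 - r1.2)) = (h:ℤ) * ((n + 1 : ℕ) : ℤ)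
          push_cast
          rw [hr1b]
          linarith
    · have hbnA : b ∉ A := fun hc => hbE (hbAE hc)
      rcases hbhDE with hbhD | ⟨hbhA, hbhE⟩
      · -- CASE 2 : b ∉ E, b - h ∈ D
        obtain ⟨r0, hr0R, hr0b⟩ : ∃ r ∈ R, r.1 = b - (h:ℤ) := by
          rw [hD] at hbhD; simpa using hbhD
        obtain ⟨a0, ha0, ha0e⟩ := ih5 r0 hr0R
        have he0E : r0.2 ∈ E := by rw [hE]; exact Finset.mem_image_of_mem _ hr0R
        have hbhA' : b - (h:ℤ) ∉ A := fun hc => hDnA _ hbhD hc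
        have hnew : (b, r0.2) ∉ R.erase r0 := by
          intro hc
          exact hbD (by rw [hD]; exact Finset.mem_image_of_mem Prod.fst (Finset.mem_of_mem_erase hc))
        have h1 : (insert (b, r0.2) (R.erase r0)).image Prod.fst
            = insert b (D.erase (b - (h:ℤ))) := by
          rw [Finset.image_insert, image_erase_injOn ih4f hr0R, ← hD, hr0b]
        have h2 : (insert (b, r0.2) (R.erase r0)).image Prod.snd = E := by
          rw [Finset.image_insert, image_erase_injOn ih4s hr0R, ← hE]
          exact Finset.insert_erase he0E
        refine ⟨insert (b, r0.2) (R.erase r0), n+1, ?_, ?_, ?_, ?_, ?_, ?_, ?_, hsz⟩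
        · rw [h1, h2, hpβ, ih1]
          ext x
          simp only [Finset.coe_insert, Finset.coe_erase, Set.mem_insert_iff, Set.mem_union,
            Set.mem_diff, Set.mem_singleton_iff, Finset.mem_coe, Finset.mem_erase]
          constructor
          · rintro (rfl | ⟨(⟨h3, h4⟩ | h3), h5⟩)
            · exact Or.inr (Or.inl rfl)
            · exact Or.inl ⟨h3, h4⟩
            · exact Or.inr (Or.inr ⟨h3, h5⟩)
          · rintro (⟨h3, h4⟩ | (rfl | ⟨h3, h4⟩))
            · exact Or.inr ⟨Or.inl ⟨h3, h4⟩, fun hc => hbhA' (hc ▸ h3)⟩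
            · exact Or.inl rfl
            · exact Or.inr ⟨Or.inr h3, h4⟩
        · rw [h1]
          apply Set.eq_empty_iff_forall_notMem.mpr
          rintro x ⟨hx1, hx2⟩
          simp only [Finset.coe_insert, Set.mem_insert_iff, Finset.mem_coe] at hx1
          rcases hx1 with rfl | hx1
          · exact hbnA hx2
          · exact hDnA x (Finset.mem_of_mem_erase hx1) hx2
        · rw [h2]; exact ih3
        · refine injOn_insert_pair (injOn_of_subset ih4f (Finset.erase_subset _ _)) ?_
          intro x hx hc
          apply hbD
          rw [hD]
          have hc' : x.1 = b := hc
          rw [← hc']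
          exact Finset.mem_image_of_mem Prod.fst (Finset.mem_of_mem_erase hx)
        · refine injOn_insert_pair (injOn_of_subset ih4s (Finset.erase_subset _ _)) ?_
          intro x hx hc
          have hx' := Finset.mem_of_mem_erase hx
          have heq : x = r0 := ih4s (by exact_mod_cast hx') (by exact_mod_cast hr0R) hc
          exact (Finset.ne_of_mem_erase hx) heq
        · intro r hr
          rcases Finset.mem_insert.mp hr with rfl | hr
          · refine ⟨a0 + 1, by omega, ?_⟩
            show b - r0.2 = (h:ℤ) * ((a0 + 1 : ℕ) : ℤ)
            have h3 := ha0e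
            rw [hr0b] at h3
            push_cast
            linarith
          · exact ih5 r (Finset.mem_of_mem_erase hr)
        · rw [Finset.sum_insert hnew, Finset.sum_erase_eq_sub hr0R, ih6]
          show b - r0.2 + ((h:ℤ) * n - (r0.1 - r0.2)) = (h:ℤ) * ((n + 1 : ℕ) : ℤ)
          rw [hr0b]
          push_cast
          linarith
      · -- CASE 1 : b ∉ E, b - h ∈ A \ E
        have hbhD : b - (h:ℤ) ∉ D := fun hc => hDnA _ hc hbhA
        have hnew : (b, b - (h:ℤ)) ∉ R := by
          intro hc
          exact hbD (by rw [hD]; exact Finset.mem_image_of_mem _ hc)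
        refine ⟨insert (b, b - (h:ℤ)) R, n+1, ?_, ?_, ?_, ?_, ?_, ?_, ?_, hsz⟩
        · -- beta set identity
          rw [Finset.image_insert, Finset.image_insert]
          rw [hpβ, ih1]
          ext x
          simp only [Finset.coe_insert, Set.mem_insert_iff, Set.mem_union, Set.mem_diff,
            Set.mem_singleton_iff, Finset.mem_coe]
          constructor
          · rintro (rfl | ⟨(⟨h1, h2⟩ | h1), h3⟩)
            · right; exact Set.mem_insert _ _
            · left
              refine ⟨h1, ?_⟩
              rintro (rfl | hc)
              · exact h3 rfl
              · exact h2 hc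
            · right; right; exact h1
          · rintro (⟨h1, h2⟩ | (rfl | h1))
            · right
              refine ⟨Or.inl ⟨h1, fun hc => h2 (Or.inr hc)⟩, fun hc => h2 (Or.inl hc)⟩
            · left; rfl
            · right
              refine ⟨Or.inr h1, ?_⟩
              rintro rfl; exact hbhD h1
        · rw [Finset.image_insert]
          apply Set.eq_empty_iff_forall_notMem.mpr
          rintro x ⟨hx1, hx2⟩
          simp only [Finset.coe_insert, Set.mem_insert_iff, Finset.mem_coe] at hx1
          rcases hx1 with rfl | hx1
          · exact hbnA hx2
          · exact hDnA x hx1 hx2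
        · rw [Finset.image_insert]
          intro x hx
          simp only [Finset.coe_insert, Set.mem_insert_iff, Finset.mem_coe] at hx
          rcases hx with rfl | hx
          · exact hbhA
          · exact hEA x hx
        · refine injOn_insert_pair ih4f (fun x hx hc => hbD ?_)
          rw [hD]
          have hc' : x.1 = b := hc
          rw [← hc']
          exact Finset.mem_image_of_mem Prod.fst hx
        · refine injOn_insert_pair ih4s (fun x hx hc => hbhE ?_)
          rw [hE]
          have hc' : x.2 = b - (h:ℤ) := hc
          rw [← hc']
          exact Finset.mem_image_of_mem Prod.snd hx
        · intro r hr
          rcases Finset.mem_insert.mp hr with rfl | hr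
          · exact ⟨1, by omega, by push_cast; ring⟩
          · exact ih5 r hr
        · rw [Finset.sum_insert hnew, ih6]
          push_cast; ring



lemma coord_exists (s t : ℕ) (ht : 0 < t) (hst : Nat.Coprime s t) (x : ℤ) :
    ∃ α β : ℤ, 0 ≤ α ∧ α < t ∧ x = α * s + β * t := by
  obtain ⟨u, v, huv⟩ : ∃ u v : ℤ, u * s + v * t = 1 := by
    have h := Nat.isCoprime_iff_coprime.mpr hst
    obtain ⟨u, v, huv⟩ := h
    exact ⟨u, v, huv⟩
  have ht' : (t : ℤ) ≠ 0 := by positivity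
  have ht0 : (0 : ℤ) < t := by positivity
  refine ⟨(x * u) % t, x * v + ((x * u) / t) * s, Int.emod_nonneg _ ht', Int.emod_lt_of_pos _ ht0, ?_⟩
  have hdiv : (x * u) % t + t * ((x * u) / t) = x * u := Int.emod_add_mul_ediv _ _
  linear_combination (-(s:ℤ)) * hdiv + (-x) * huv

lemma coprime_int_dvd (s t : ℕ) (hst : Nat.Coprime s t) {k : ℤ}
    (h : (t : ℤ) ∣ k * s) : (t : ℤ) ∣ k := by
  have hco : IsCoprime (t : ℤ) (s : ℤ) := Nat.isCoprime_iff_coprime.mpr hst.symm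
  exact hco.dvd_of_dvd_mul_right h

lemma coord_unique (s t : ℕ) (hst : Nat.Coprime s t) (ht : 0 < t) {α β α' β' : ℤ}
    (hα : 0 ≤ α) (hα' : α < t) (hα2 : 0 ≤ α') (hα2' : α' < t)
    (he : α * s + β * t = α' * s + β' * t) : α = α' ∧ β = β' := by
  have ht0 : (0 : ℤ) < t := by positivity
  have hdvd : (t : ℤ) ∣ (α - α') * s := by
    refine ⟨β' - β, ?_⟩
    linarith [he]
  obtain ⟨k, hk⟩ := coprime_int_dvd s t hst hdvd
  have hk0 : k = 0 := by
    rcases lt_trichotomy k 0 with h | h | h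
    · have : k ≤ -1 := by omega
      nlinarith
    · exact h
    · have : 1 ≤ k := by omega
      nlinarith
  rw [hk0, mul_zero] at hk
  have hαα : α = α' := by omega
  refine ⟨hαα, ?_⟩
  rw [hαα] at he
  have : β * t = β' * t := by linarith
  exact mul_right_cancel₀ (by positivity) this

lemma rep_iff (s t : ℕ) (hst : Nat.Coprime s t) (ht : 0 < t) {m α β : ℤ}
    (hα : 0 ≤ α) (hα' : α < t) (hm : m = α * s + β * t) :
    (∃ a b : ℕ, m = (a : ℤ) * s + (b : ℤ) * t) ↔ 0 ≤ β := by
  constructor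
  · rintro ⟨a, b, hab⟩
    have hdvd : (t : ℤ) ∣ ((a : ℤ) - α) * s := by
      refine ⟨β - b, ?_⟩
      have : α * s + β * t = (a : ℤ) * s + (b : ℤ) * t := by rw [← hm, hab]
      linarith
    obtain ⟨k, hk⟩ := coprime_int_dvd s t hst hdvd
    have ha0 : (0 : ℤ) ≤ a := by positivity
    have hk0 : 0 ≤ k := by
      by_contra hneg
      push_neg at hneg
      have : k ≤ -1 := by omega
      have ht0 : (0 : ℤ) < t := by positivity
      nlinarith
    have hβ : β = k * s + b := by
      have h1 : α * s + β * t = (a : ℤ) * s + (b : ℤ) * t := by rw [← hm, hab]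
      have h2 : (a : ℤ) = α + t * k := by omega
      rw [h2] at h1
      have h3 : β * t = (t * k * s + b * t : ℤ) := by linarith [h1]
      have ht0 : (0 : ℤ) < t := by positivity
      have := mul_right_cancel₀ (a := β) (b := (t:ℤ)) (c := k * s + b) (by positivity) (by linarith)
      exact this
    rw [hβ]
    have : (0:ℤ) ≤ k * s := by positivity
    have : (0:ℤ) ≤ (b:ℤ) := by positivity
    linarith
  · intro hβ
    exact ⟨α.toNat, β.toNat, by rw [hm, Int.toNat_of_nonneg hα, Int.toNat_of_nonneg hβ]⟩


end Stmt7

open Stmt7 Finset in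
/-- a partition of `|κ_{s,t}| + st` with `s`-core and `t`-core both
equal to `κ_{s,t}` is obtained from `κ_{s,t}` by adding a single rim `st`-hook. -/
theorem stmt7 (s t : ℕ) (hs : 1 < s) (ht : 1 < t) (hst : Nat.Coprime s t)
    (κ l : Partition')
    (hκ : κ.betaSet = {x : ℤ | ∃ j k : ℕ, j < t ∧
      2 * (x + (t : ℤ) * k) = -(t : ℤ) - 1 + (s : ℤ) * ((t : ℤ) - 1 - 2 * j)})
    (hsize : l.size = κ.size + s * t)
    (hcs : Partition'.HasCore s l κ) (hct : Partition'.HasCore t l κ) :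
    ∃ b ∈ κ.betaSet, b + (s : ℤ) * t ∉ κ.betaSet ∧
      l.betaSet = insert (b + (s : ℤ) * t) (κ.betaSet \ {b}) := by
  have hs0 : (0:ℤ) < s := by exact_mod_cast Nat.zero_lt_of_lt hs
  have ht0 : (0:ℤ) < t := by exact_mod_cast Nat.zero_lt_of_lt ht
  -- the offset X with 2X = st - s - t - 1
  obtain ⟨X, hX⟩ : ∃ X : ℤ, 2 * X = (s:ℤ) * t - s - t - 1 := by
    have hodd : ¬ (2 ∣ s) ∨ ¬ (2 ∣ t) := by
      by_contra hc
      push_neg at hc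
      have hg : 2 ∣ Nat.gcd s t := Nat.dvd_gcd hc.1 hc.2
      rw [Nat.Coprime] at hst
      omega
    rcases hodd with h | h
    · have hw : s = 2 * (s / 2) + 1 := by omega
      refine ⟨((s/2 : ℕ) : ℤ) * t - ((s/2 : ℕ) : ℤ) - 1, ?_⟩
      have hcast : (s:ℤ) = 2 * ((s/2 : ℕ):ℤ) + 1 := by exact_mod_cast hw
      rw [hcast]; ring
    · have hw : t = 2 * (t / 2) + 1 := by omega
      refine ⟨(s : ℤ) * ((t/2 : ℕ) : ℤ) - ((t/2 : ℕ) : ℤ) - 1, ?_⟩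
      have hcast : (t:ℤ) = 2 * ((t/2 : ℕ):ℤ) + 1 := by exact_mod_cast hw
      rw [hcast]; ring
  -- characterization of the beta set of κ
  have hK : κ.betaSet = {n : ℤ | ∃ a b : ℕ, X - n = (a:ℤ) * s + (b:ℤ) * t} := by
    rw [hκ]
    ext x
    simp only [Set.mem_setOf_eq]
    constructor
    · rintro ⟨j, k, hjt, hjk⟩
      refine ⟨j, k, ?_⟩
      have h2 : 2 * (X - x) = 2 * ((j:ℤ) * s + (k:ℤ) * t) := by linear_combination hX - hjk
      exact mul_left_cancel₀ two_ne_zero h2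
    · rintro ⟨a, b, hab⟩
      refine ⟨a % t, b + (a / t) * s, Nat.mod_lt a (by omega), ?_⟩
      have hmod : ((a % t : ℕ) : ℤ) + (t:ℤ) * ((a / t : ℕ):ℤ) = (a:ℤ) := by
        exact_mod_cast Nat.mod_add_div a t
      have hgoal : 2 * (x + (t:ℤ) * ((b:ℤ) + ((a/t : ℕ):ℤ) * s))
          = -(t:ℤ) - 1 + (s:ℤ) * ((t:ℤ) - 1 - 2 * ((a % t : ℕ):ℤ)) := by
        linear_combination hX - 2 * hab + 2 * (s:ℤ) * hmod
      exact_mod_cast hgoal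
  -- the two hook-removal chains
  obtain ⟨Rs, ns, hs1, hs2, hs3, hs4f, hs4s, hs5, hs6, hs7⟩ :=
    chainInv (Nat.zero_lt_of_lt hs) hcs.1
  obtain ⟨Rt, nt, ht1, ht2, ht3, ht4f, ht4s, ht5, ht6, ht7⟩ :=
    chainInv (Nat.zero_lt_of_lt ht) hct.1
  have hlsize : (l.size : ℤ) = (κ.size : ℤ) + (s:ℤ) * t := by
    rw [hsize]; push_cast; ring
  -- total displacements
  have hTots : ∑ r ∈ Rs, (r.1 - r.2) = (s:ℤ) * t := by
    rw [hs6]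
    have : (s:ℤ) * ns = (s:ℤ) * t := by rw [hs7] at hlsize; linarith
    exact this
  have hTott : ∑ r ∈ Rt, (r.1 - r.2) = (t:ℤ) * s := by
    rw [ht6]
    have : (t:ℤ) * nt = (t:ℤ) * s := by rw [ht7] at hlsize; linarith
    exact this
  -- D and E sets agree between the two chains
  have hDs_set : (↑(Rs.image Prod.fst) : Set ℤ) = l.betaSet \ κ.betaSet := by
    ext x
    constructor
    · intro hx
      have hxn : x ∉ κ.betaSet := by
        intro hc
        have : x ∈ (↑(Rs.image Prod.fst) : Set ℤ) ∩ κ.betaSet := ⟨hx, hc⟩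
        rw [hs2] at this
        exact this
      exact ⟨by rw [hs1]; exact Or.inr hx, hxn⟩
    · rintro ⟨hxl, hxκ⟩
      rw [hs1] at hxl
      rcases hxl with ⟨hxκ', _⟩ | hxD
      · exact absurd hxκ' hxκ
      · exact hxD
  have hEs_set : (↑(Rs.image Prod.snd) : Set ℤ) = κ.betaSet \ l.betaSet := by
    ext x
    constructor
    · intro hx
      refine ⟨hs3 hx, ?_⟩
      intro hxl
      rw [hs1] at hxl
      rcases hxl with ⟨_, hno⟩ | hxD
      · exact hno hx
      · have : x ∈ (↑(Rs.image Prod.fst) : Set ℤ) ∩ κ.betaSet := ⟨hxD, hs3 hx⟩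
        rw [hs2] at this
        exact this
    · rintro ⟨hxκ, hxl⟩
      by_contra hxE
      exact hxl (by rw [hs1]; exact Or.inl ⟨hxκ, hxE⟩)
  have hDt_set : (↑(Rt.image Prod.fst) : Set ℤ) = l.betaSet \ κ.betaSet := by
    ext x
    constructor
    · intro hx
      have hxn : x ∉ κ.betaSet := by
        intro hc
        have : x ∈ (↑(Rt.image Prod.fst) : Set ℤ) ∩ κ.betaSet := ⟨hx, hc⟩
        rw [ht2] at this
        exact this
      exact ⟨by rw [ht1]; exact Or.inr hx, hxn⟩
    · rintro ⟨hxl, hxκ⟩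
      rw [ht1] at hxl
      rcases hxl with ⟨hxκ', _⟩ | hxD
      · exact absurd hxκ' hxκ
      · exact hxD
  have hEt_set : (↑(Rt.image Prod.snd) : Set ℤ) = κ.betaSet \ l.betaSet := by
    ext x
    constructor
    · intro hx
      refine ⟨ht3 hx, ?_⟩
      intro hxl
      rw [ht1] at hxl
      rcases hxl with ⟨_, hno⟩ | hxD
      · exact hno hx
      · have : x ∈ (↑(Rt.image Prod.fst) : Set ℤ) ∩ κ.betaSet := ⟨hxD, ht3 hx⟩
        rw [ht2] at this
        exact this
    · rintro ⟨hxκ, hxl⟩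
      by_contra hxE
      exact hxl (by rw [ht1]; exact Or.inl ⟨hxκ, hxE⟩)
  have hDeq : Rs.image Prod.fst = Rt.image Prod.fst :=
    Finset.coe_injective (hDs_set.trans hDt_set.symm)
  have hEeq : Rs.image Prod.snd = Rt.image Prod.snd :=
    Finset.coe_injective (hEs_set.trans hEt_set.symm)
  -- canonical coordinates
  obtain ⟨CA, CB, hC⟩ : ∃ CA CB : ℤ → ℤ, ∀ x : ℤ,
      0 ≤ CA x ∧ CA x < t ∧ x = CA x * s + CB x * t := by
    have h := fun x => coord_exists s t (by omega) hst x
    choose CA CB h1 h2 h3 using h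
    exact ⟨CA, CB, fun x => ⟨h1 x, h2 x, h3 x⟩⟩
  have hCBu : ∀ x α β : ℤ, 0 ≤ α → α < t → x = α * s + β * t → CB x = β := by
    intro x α β h1 h2 h3
    obtain ⟨c1, c2, c3⟩ := hC x
    exact (coord_unique s t hst (by omega) c1 c2 h1 h2 (by rw [← c3, ← h3])).2
  -- per-pair lemma, s-chain
  have hpairS : ∀ r ∈ Rs, CB (X - r.2) = CB (X - r.1) + s := by
    intro r hr
    obtain ⟨a, ha0, hae⟩ := hs5 r hr
    have hdD : r.1 ∈ Rs.image Prod.fst := Finset.mem_image_of_mem _ hr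
    have hdnK : r.1 ∉ κ.betaSet := by
      intro hc
      have : r.1 ∈ (↑(Rs.image Prod.fst) : Set ℤ) ∩ κ.betaSet :=
        ⟨by exact_mod_cast hdD, hc⟩
      rw [hs2] at this
      exact this
    have heK : r.2 ∈ κ.betaSet :=
      hs3 (by exact_mod_cast Finset.mem_image_of_mem Prod.snd hr)
    obtain ⟨hα0, hαt, hdec⟩ := hC (X - r.1)
    have hβ : CB (X - r.1) < 0 := by
      by_contra hb
      push_neg at hb
      apply hdnK
      rw [hK]
      exact (rep_iff s t hst (by omega) hα0 hαt hdec).mpr hb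
    have hterm_le : r.1 - r.2 ≤ (s:ℤ) * t := by
      have hpos : ∀ x ∈ Rs, (0:ℤ) ≤ x.1 - x.2 := by
        intro x hx
        obtain ⟨a', _, he'⟩ := hs5 x hx
        rw [he']
        positivity
      have h1 := Finset.single_le_sum hpos hr
      rw [hTots] at h1
      exact h1
    have hat : (a:ℤ) ≤ t := by
      have h1 : (s:ℤ) * a ≤ (s:ℤ) * t := by rw [← hae]; exact hterm_le
      exact le_of_mul_le_mul_left h1 hs0
    have heq : X - r.2 = (CA (X - r.1) + a) * s + CB (X - r.1) * t := by
      linear_combination hdec + hae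
    by_cases hcase : CA (X - r.1) + a < t
    · exfalso
      have hrep : ∃ p q2 : ℕ, X - r.2 = (p:ℤ) * s + (q2:ℤ) * t := by
        rw [hK] at heK
        exact heK
      have := (rep_iff s t hst (by omega) (by positivity) hcase heq).mp hrep
      omega
    · push_neg at hcase
      have h0 : 0 ≤ CA (X - r.1) + a - t := by omega
      have h1 : CA (X - r.1) + a - t < t := by omega
      have heq2 : X - r.2 = (CA (X - r.1) + a - t) * s + (CB (X - r.1) + s) * t := by
        linear_combination heq
      exact hCBu _ _ _ h0 h1 heq2
  -- per-pair lemma, t-chain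
  have hpairT : ∀ r ∈ Rt, CB (X - r.2) = CB (X - r.1) + (r.1 - r.2) / t := by
    intro r hr
    obtain ⟨bb, hb0, hbe⟩ := ht5 r hr
    obtain ⟨hα0, hαt, hdec⟩ := hC (X - r.1)
    have hdiv : (r.1 - r.2) / t = (bb : ℤ) := by
      rw [hbe]
      exact Int.mul_ediv_cancel_left _ (by positivity)
    rw [hdiv]
    refine hCBu _ _ _ hα0 hαt ?_
    linear_combination hdec + hbe
  -- sum computations
  have hsumS : ∑ r ∈ Rs, CB (X - r.2) = (∑ r ∈ Rs, CB (X - r.1)) + Rs.card * s := by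
    rw [Finset.sum_congr rfl hpairS, Finset.sum_add_distrib, Finset.sum_const, nsmul_eq_mul]
  have hsumT : ∑ r ∈ Rt, CB (X - r.2)
      = (∑ r ∈ Rt, CB (X - r.1)) + ∑ r ∈ Rt, (r.1 - r.2) / t := by
    rw [Finset.sum_congr rfl hpairT, Finset.sum_add_distrib]
  have hbsum : ∑ r ∈ Rt, (r.1 - r.2) / t = (s:ℤ) := by
    have h1 : (t:ℤ) * ∑ r ∈ Rt, (r.1 - r.2) / t = (t:ℤ) * s := by
      rw [Finset.mul_sum]
      have h2 : ∀ r ∈ Rt, (t:ℤ) * ((r.1 - r.2)/t) = r.1 - r.2 := by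
        intro r hr
        obtain ⟨bb, _, hbe⟩ := ht5 r hr
        rw [hbe, Int.mul_ediv_cancel_left _ (by positivity)]
      rw [Finset.sum_congr rfl h2, hTott]
    exact mul_left_cancel₀ (by positivity) h1
  -- sums over images
  have hSsnd : ∑ e ∈ Rs.image Prod.snd, CB (X - e) = ∑ r ∈ Rs, CB (X - r.2) :=
    Finset.sum_image (fun x hx y hy hxy => hs4s (by exact_mod_cast hx) (by exact_mod_cast hy) hxy)
  have hTsnd : ∑ e ∈ Rt.image Prod.snd, CB (X - e) = ∑ r ∈ Rt, CB (X - r.2) :=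
    Finset.sum_image (fun x hx y hy hxy => ht4s (by exact_mod_cast hx) (by exact_mod_cast hy) hxy)
  have hSfst : ∑ e ∈ Rs.image Prod.fst, CB (X - e) = ∑ r ∈ Rs, CB (X - r.1) :=
    Finset.sum_image (fun x hx y hy hxy => hs4f (by exact_mod_cast hx) (by exact_mod_cast hy) hxy)
  have hTfst : ∑ e ∈ Rt.image Prod.fst, CB (X - e) = ∑ r ∈ Rt, CB (X - r.1) :=
    Finset.sum_image (fun x hx y hy hxy => ht4f (by exact_mod_cast hx) (by exact_mod_cast hy) hxy)
  have hsnd_eq : ∑ r ∈ Rs, CB (X - r.2) = ∑ r ∈ Rt, CB (X - r.2) := by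
    rw [← hSsnd, ← hTsnd, hEeq]
  have hfst_eq : ∑ r ∈ Rs, CB (X - r.1) = ∑ r ∈ Rt, CB (X - r.1) := by
    rw [← hSfst, ← hTfst, hDeq]
  -- conclude card = 1
  have hcard1 : Rs.card = 1 := by
    have hc : (Rs.card : ℤ) * s = 1 * s := by
      rw [one_mul]
      have := hsumS
      rw [hsnd_eq, hsumT, hbsum, hfst_eq] at this
      linarith
    have := mul_right_cancel₀ (ne_of_gt hs0) hc
    exact_mod_cast this
  obtain ⟨r0, hr0⟩ := Finset.card_eq_one.mp hcard1
  have hr0R : r0 ∈ Rs := by rw [hr0]; exact Finset.mem_singleton_self r0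
  have hr0sum : r0.1 - r0.2 = (s:ℤ) * t := by
    rw [hr0, Finset.sum_singleton] at hTots
    exact hTots
  have hr01 : r0.1 = r0.2 + (s:ℤ) * t := by linarith
  refine ⟨r0.2, ?_, ?_, ?_⟩
  · exact hs3 (by exact_mod_cast Finset.mem_image_of_mem Prod.snd hr0R)
  · rw [← hr01]
    intro hc
    have : r0.1 ∈ (↑(Rs.image Prod.fst) : Set ℤ) ∩ κ.betaSet :=
      ⟨by exact_mod_cast Finset.mem_image_of_mem Prod.fst hr0R, hc⟩
    rw [hs2] at this
    exact this
  · rw [← hr01, hs1, hr0]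
    rw [Finset.image_singleton, Finset.image_singleton]
    simp only [Finset.coe_singleton]
    rw [Set.union_singleton]
end

section
/- Let s, t be coprime integers greater than 1 and x ∈ ℤ, and let m, n be s×t (0,1)-matrices with the same number of 1 entries, corresponding via the pinch-point bijection θ_x to partitions θ_x(m), θ_x(n) with pinch-point x. Then θ_x(m) and θ_x(n) have the same s-core if and only if m and n have the same row sums, and the same t-core if and only if m and n have the same column sums. -/
namespace Stmt12

def cls (s : ℕ) (d : ℤ) : Set ℤ := {b | (s:ℤ) ∣ b - d}

def chgA (s : ℕ) (d : ℤ) (B : Set ℤ) : Set ℤ := B ∩ cls s d ∩ Set.Ici d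
def chgB (s : ℕ) (d : ℤ) (B : Set ℤ) : Set ℤ := Bᶜ ∩ cls s d ∩ Set.Iio d
noncomputable def chg (s : ℕ) (d : ℤ) (B : Set ℤ) : ℤ :=
  ((chgA s d B).ncard : ℤ) - ((chgB s d B).ncard : ℤ)

/-- `B` is a plausible beta-set: full below `N`, contained below `M`, correct count. -/
structure Good (N M : ℤ) (B : Set ℤ) : Prop where
  low : Set.Iic N ⊆ B
  high : B ⊆ Set.Iic M
  count : ((B ∩ Set.Ioi N).ncard : ℤ) = -N - 1

lemma Good.finite_inter_Ioi {N M : ℤ} {B : Set ℤ} (h : Good N M B) (a : ℤ) :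
    (B ∩ Set.Ioi a).Finite := by
  apply (Set.finite_Ioc a M).subset
  rintro x ⟨hx, hx2⟩; exact ⟨hx2, h.high hx⟩

lemma Good.finA {N M : ℤ} {B : Set ℤ} (h : Good N M B) (s : ℕ) (d : ℤ) :
    (chgA s d B).Finite := by
  apply (Set.finite_Icc d M).subset
  rintro x ⟨⟨hx, -⟩, hx2⟩; exact ⟨hx2, h.high hx⟩

lemma Good.finB {N M : ℤ} {B : Set ℤ} (h : Good N M B) (s : ℕ) (d : ℤ) :
    (chgB s d B).Finite := by
  apply (Set.finite_Ioo N d).subset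
  rintro x ⟨⟨hx, -⟩, hx2⟩
  refine ⟨?_, hx2⟩
  by_contra hc
  exact hx (h.low (by simp only [Set.mem_Iic]; omega))

end Stmt12

namespace Stmt12

/-- the beta enumeration of a partition -/
def ben (l : Partition') : ℕ → ℤ := fun r => (l.parts r : ℤ) - (r + 1)

lemma ben_strictAnti (l : Partition') : StrictAnti (ben l) := by
  intro i j hij
  have := l.antitone hij.le
  unfold ben
  push_cast
  omega

lemma gap_le {f : ℕ → ℤ} (hf : StrictAnti f) : ∀ a b : ℕ, a ≤ b → f b + (b - a : ℤ) ≤ f a := by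
  intro a b hab
  induction b with
  | zero => interval_cases a; simp
  | succ n ih =>
    rcases Nat.lt_or_ge a (n+1) with h | h
    · have h1 := ih (by omega)
      have h2 : f (n+1) < f n := hf (by omega)
      push_cast; push_cast at h1; omega
    · have : a = n + 1 := by omega
      subst this; simp

lemma exists_tail (l : Partition') : ∃ R : ℕ, ∀ r, R ≤ r → l.parts r = 0 := by
  rcases l.parts.support.exists_nat_subset_range with ⟨R, hR⟩
  exact ⟨R, fun r hr => Finsupp.notMem_support_iff.mp
    (fun hm => by have := hR hm; simp at this; omega)⟩

lemma exists_good (l : Partition') : ∃ N M : ℤ, Good N M l.betaSet := by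
  obtain ⟨R, hR⟩ := exists_tail l
  refine ⟨-(R+1), (l.parts 0 : ℤ), ?_, ?_, ?_⟩
  · intro n hn
    simp only [Set.mem_Iic] at hn
    have hn1 : (1:ℤ) ≤ -n := by omega
    refine ⟨(-n-1).toNat, ?_⟩
    have hc : ((-n-1).toNat : ℤ) = -n-1 := Int.toNat_of_nonneg (by omega)
    have : (R:ℤ) ≤ (-n-1).toNat := by omega
    show (l.parts _ : ℤ) - _ = _
    rw [hR _ (by exact_mod_cast this)]
    push_cast [hc]; omega
  · rintro b ⟨r, rfl⟩
    simp only [Set.mem_Iic]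
    have := l.antitone (Nat.zero_le r)
    push_cast
    omega
  · have himg : l.betaSet ∩ Set.Ioi (-(R+1:ℤ)) = ben l '' (Set.Iio R) := by
      ext b
      constructor
      · rintro ⟨⟨r, rfl⟩, hb⟩
        refine ⟨r, ?_, rfl⟩
        simp only [Set.mem_Iio]
        by_contra hc
        simp only [Set.mem_Ioi] at hb
        rw [show l.parts r = 0 from hR r (by omega)] at hb
        push_cast at hb; omega
      · rintro ⟨r, hr, rfl⟩
        refine ⟨⟨r, rfl⟩, ?_⟩
        simp only [Set.mem_Iio] at hr
        have h2 : ben l r ≥ ben l (R-1) + ((R-1) - r : ℤ) := by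
          have := gap_le (ben_strictAnti l) r (R-1) (by omega)
          push_cast at this ⊢; omega
        have h3 : ben l (R-1) ≥ -(R:ℤ) := by
          unfold ben; push_cast; have : (0:ℤ) ≤ l.parts (R-1) := by positivity
          omega
        simp only [Set.mem_Ioi]
        push_cast at h2 ⊢
        omega
    rw [himg, Set.ncard_image_of_injective _ (ben_strictAnti l).injective]
    rw [show (Set.Iio R : Set ℕ) = (Finset.range R : Finset ℕ) by ext; simp,
      Set.ncard_coe_finset, Finset.card_range]
    push_cast; ring

end Stmt12

namespace Stmt12

lemma realize {N M : ℤ} {B : Set ℤ} (hg : Good N M B) : ∃ l : Partition', l.betaSet = B := by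
  classical
  have hfin : (B ∩ Set.Ioi N).Finite := hg.finite_inter_Ioi N
  set F : Finset ℤ := hfin.toFinset with hF
  set K : ℕ := F.card with hKdef
  have hKN : (K : ℤ) = -N - 1 := by
    have := hg.count
    rw [Set.ncard_eq_toFinset_card _ hfin] at this
    exact this
  set e := F.orderIsoOfFin rfl with he
  set f : ℕ → ℤ := fun r => if h : r < K then (e ⟨K - 1 - r, by omega⟩ : ℤ) else -(r+1) with hf
  have hmemF : ∀ z ∈ F, z ∈ B ∧ N < z := by
    intro z hz
    rw [hF, Set.Finite.mem_toFinset] at hz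
    exact ⟨hz.1, hz.2⟩
  have hfK : ∀ r, K ≤ r → f r = -(r+1 : ℤ) := by
    intro r hr; simp [hf, Nat.not_lt.mpr hr]
  have hanti : StrictAnti f := by
    apply strictAnti_nat_of_succ_lt
    intro n
    rcases Nat.lt_or_ge (n+1) K with h1 | h1
    · have h0 : n < K := by omega
      rw [hf]
      simp only [dif_pos h1, dif_pos h0]
      have : (⟨K - 1 - (n+1), by omega⟩ : Fin K) < ⟨K - 1 - n, by omega⟩ := by
        simp only [Fin.mk_lt_mk]; omega
      exact_mod_cast (e.strictMono this)
    · rcases Nat.lt_or_ge n K with h2 | h2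
      · have hn : n = K - 1 := by omega
        have hKpos : 0 < K := by omega
        rw [hfK (n+1) (by omega)]
        rw [hf]; simp only [dif_pos h2]
        have hm := (hmemF _ (e ⟨K - 1 - n, by omega⟩).2).2
        push_cast
        omega
      · rw [hfK n h2, hfK (n+1) (by omega)]; push_cast; omega
  have hlb : ∀ r : ℕ, -(r:ℤ)-1 ≤ f r := by
    intro r
    rcases Nat.lt_or_ge r K with h | h
    · have := gap_le hanti r K h.le
      rw [hfK K le_rfl] at this
      push_cast at this ⊢; omega
    · rw [hfK r h]; push_cast; omega
  have hrange : Set.range f = B := by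
    ext b
    constructor
    · rintro ⟨r, rfl⟩
      rcases Nat.lt_or_ge r K with h | h
      · rw [hf]; simp only [dif_pos h]
        exact (hmemF _ (e ⟨K - 1 - r, by omega⟩).2).1
      · rw [hfK r h]
        exact hg.low (by simp only [Set.mem_Iic]; push_cast; omega)
    · intro hb
      rcases lt_or_ge N b with h | h
      · have hbF : b ∈ F := by rw [hF, Set.Finite.mem_toFinset]; exact ⟨hb, h⟩
        obtain ⟨i, hi⟩ := e.surjective ⟨b, hbF⟩
        have hKpos : 0 < K := i.pos
        refine ⟨K - 1 - i, ?_⟩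
        rw [hf]
        have hik : (i : ℕ) < K := i.2
        simp only [dif_pos (show K - 1 - (i:ℕ) < K by omega)]
        have : (⟨K - 1 - (K - 1 - (i:ℕ)), by omega⟩ : Fin K) = i := by
          apply Fin.ext; simp; omega
        rw [this, hi]
      · refine ⟨(-b-1).toNat, ?_⟩
        have hge : K ≤ (-b-1).toNat := by omega
        rw [hfK _ hge]
        have : ((-b-1).toNat : ℤ) = -b-1 := Int.toNat_of_nonneg (by omega)
        omega
  have hsupp : ∀ r : ℕ, (fun r : ℕ => (f r + r + 1).toNat) r ≠ 0 → r ∈ Finset.range K := by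
    intro r hr
    simp only [Finset.mem_range]
    by_contra h
    apply hr
    show (f r + r + 1).toNat = 0
    rw [hfK r (by omega)]
    simp
  refine ⟨⟨Finsupp.onFinset (Finset.range K) (fun r => (f r + r + 1).toNat) hsupp, ?_⟩, ?_⟩
  · intro i j hij
    simp only [Finsupp.onFinset_apply]
    have := gap_le hanti i j hij
    apply Int.toNat_le_toNat
    push_cast at this ⊢
    omega
  · refine Eq.trans ?_ hrange
    unfold Partition'.betaSet
    have heq : ∀ r : ℕ, (((Finsupp.onFinset (Finset.range K) (fun r => (f r + r + 1).toNat) hsupp) r : ℕ) : ℤ) - ((r : ℤ) + 1) = f r := by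
      intro r
      simp only [Finsupp.onFinset_apply]
      have := hlb r
      have hc : ((f r + r + 1).toNat : ℤ) = f r + r + 1 := Int.toNat_of_nonneg (by omega)
      omega
    exact congrArg Set.range (funext heq)

end Stmt12

namespace Stmt12

lemma Good.move {N M : ℤ} {B : Set ℤ} (hg : Good N M B) {b c : ℤ} (hb : b ∈ B)
    (hc : b - c ∉ B) (hc0 : 0 ≤ c) : Good N M (insert (b - c) (B \ {b})) := by
  have hbN : N < b - c := by
    by_contra h
    exact hc (hg.low (by simp only [Set.mem_Iic]; omega))
  constructor
  · intro n hn
    simp only [Set.mem_Iic] at hn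
    right
    exact ⟨hg.low (by simpa using hn), by simp; omega⟩
  · rintro z (rfl | ⟨hz, -⟩)
    · have := hg.high hb
      simp only [Set.mem_Iic] at this ⊢
      omega
    · exact hg.high hz
  · have : insert (b - c) (B \ {b}) ∩ Set.Ioi N = insert (b - c) ((B ∩ Set.Ioi N) \ {b}) := by
      ext z
      simp only [Set.mem_insert_iff, Set.mem_inter_iff, Set.mem_diff, Set.mem_Ioi,
        Set.mem_singleton_iff]
      constructor
      · rintro ⟨rfl | ⟨hz1, hz2⟩, hz3⟩
        · left; rfl
        · right; exact ⟨⟨hz1, hz3⟩, hz2⟩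
      · rintro (rfl | ⟨⟨hz1, hz3⟩, hz2⟩)
        · exact ⟨Or.inl rfl, hbN⟩
        · exact ⟨Or.inr ⟨hz1, hz2⟩, hz3⟩
    rw [this]
    have hfin : (B ∩ Set.Ioi N).Finite := hg.finite_inter_Ioi N
    have hbmem : b ∈ B ∩ Set.Ioi N := ⟨hb, by simp only [Set.mem_Ioi]; omega⟩
    rw [Set.ncard_insert_of_notMem (fun hmem => hc hmem.1.1) hfin.diff,
      Set.ncard_diff_singleton_of_mem hbmem]
    rw [← hg.count]
    have : 0 < (B ∩ Set.Ioi N).ncard := (Set.ncard_pos hfin).mpr ⟨b, hbmem⟩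
    push_cast
    omega

/-- One abacus move is possible as a hook removal. -/
lemma step {s : ℕ} {l : Partition'} {b : ℤ} (hb : b ∈ l.betaSet)
    (hc : b - (s:ℤ) ∉ l.betaSet) : ∃ m, Partition'.RemoveHook s l m := by
  obtain ⟨N, M, hg⟩ := exists_good l
  obtain ⟨m, hm⟩ := realize (hg.move hb hc (by positivity))
  exact ⟨m, b, hb, hc, hm⟩

lemma range_eq_of_strictAnti {f g : ℕ → ℤ} (hf : StrictAnti f) (hg : StrictAnti g)
    (h : Set.range f = Set.range g) : f = g := by
  funext n
  induction n using Nat.strong_induction_on with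
  | _ n ih =>
    have h1 : f n ∈ Set.range g := h ▸ Set.mem_range_self n
    have h2 : g n ∈ Set.range f := h.symm ▸ Set.mem_range_self n
    obtain ⟨k, hk⟩ := h1
    obtain ⟨j, hj⟩ := h2
    have hfg : f n ≤ g n := by
      rcases lt_or_ge k n with hkn | hkn
      · rw [← ih k hkn] at hk
        exact absurd (hf.injective hk) (by omega)
      · rw [← hk]
        exact hg.antitone hkn
    have hgf : g n ≤ f n := by
      rcases lt_or_ge j n with hjn | hjn
      · rw [ih j hjn] at hj
        exact absurd (hg.injective hj) (by omega)
      · rw [← hj]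
        exact hf.antitone hjn
    omega

lemma betaSet_injective : Function.Injective Partition'.betaSet := by
  intro l m h
  have heq : ben l = ben m := range_eq_of_strictAnti (ben_strictAnti l) (ben_strictAnti m) h
  have : l.parts = m.parts := by
    ext r
    have := congrFun heq r
    unfold ben at this
    omega
  cases l; cases m; simp_all

end Stmt12

namespace Stmt12

lemma mem_chgA {s : ℕ} {d z : ℤ} {B : Set ℤ} :
    z ∈ chgA s d B ↔ z ∈ B ∧ (s:ℤ) ∣ z - d ∧ d ≤ z := by
  simp [chgA, cls, and_assoc]

lemma mem_chgB {s : ℕ} {d z : ℤ} {B : Set ℤ} :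
    z ∈ chgB s d B ↔ z ∉ B ∧ (s:ℤ) ∣ z - d ∧ z < d := by
  simp [chgB, cls, and_assoc]

lemma chg_congr {s : ℕ} {d : ℤ} {B B' : Set ℤ} (h : B ∩ cls s d = B' ∩ cls s d) :
    chg s d B = chg s d B' := by
  have key : ∀ z, (s:ℤ) ∣ z - d → (z ∈ B ↔ z ∈ B') := by
    intro z hz
    have h1 := Set.ext_iff.mp h z
    simp only [Set.mem_inter_iff, cls, Set.mem_setOf_eq] at h1
    tauto
  have e1 : chgA s d B = chgA s d B' := by
    ext z; rw [mem_chgA, mem_chgA]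
    constructor
    · rintro ⟨h1, h2, h3⟩; exact ⟨(key z h2).mp h1, h2, h3⟩
    · rintro ⟨h1, h2, h3⟩; exact ⟨(key z h2).mpr h1, h2, h3⟩
  have e2 : chgB s d B = chgB s d B' := by
    ext z; rw [mem_chgB, mem_chgB]
    constructor
    · rintro ⟨h1, h2, h3⟩; exact ⟨fun hc => h1 ((key z h2).mpr hc), h2, h3⟩
    · rintro ⟨h1, h2, h3⟩; exact ⟨fun hc => h1 ((key z h2).mp hc), h2, h3⟩
  unfold chg
  rw [e1, e2]

lemma chg_insert {s : ℕ} {d c : ℤ} {B : Set ℤ} (hA : (chgA s d B).Finite)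
    (hB : (chgB s d B).Finite) (hc : c ∉ B) (hcls : (s:ℤ) ∣ c - d) :
    chg s d (insert c B) = chg s d B + 1 := by
  rcases le_or_gt d c with h | h
  · have h1 : chgA s d (insert c B) = insert c (chgA s d B) := by
      ext z
      simp only [mem_chgA, Set.mem_insert_iff]
      constructor
      · rintro ⟨rfl | hz, h2, h3⟩
        · exact Or.inl rfl
        · exact Or.inr ⟨hz, h2, h3⟩
      · rintro (rfl | ⟨h1, h2, h3⟩)
        · exact ⟨Or.inl rfl, hcls, h⟩
        · exact ⟨Or.inr h1, h2, h3⟩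
    have h2 : chgB s d (insert c B) = chgB s d B := by
      ext z
      simp only [mem_chgB, Set.mem_insert_iff]
      constructor
      · rintro ⟨h1, h2, h3⟩; exact ⟨fun hz => h1 (Or.inr hz), h2, h3⟩
      · rintro ⟨h1, h2, h3⟩
        refine ⟨?_, h2, h3⟩
        rintro (rfl | hz)
        · omega
        · exact h1 hz
    unfold chg
    rw [h1, h2, Set.ncard_insert_of_notMem (fun hm => hc (mem_chgA.mp hm).1) hA]
    push_cast; ring
  · have h1 : chgA s d (insert c B) = chgA s d B := by
      ext z
      simp only [mem_chgA, Set.mem_insert_iff]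
      constructor
      · rintro ⟨rfl | hz, h2, h3⟩
        · omega
        · exact ⟨hz, h2, h3⟩
      · rintro ⟨h1, h2, h3⟩; exact ⟨Or.inr h1, h2, h3⟩
    have h2 : chgB s d (insert c B) = chgB s d B \ {c} := by
      ext z
      simp only [mem_chgB, Set.mem_insert_iff, Set.mem_diff, Set.mem_singleton_iff]
      constructor
      · rintro ⟨h1, h2, h3⟩
        exact ⟨⟨fun hz => h1 (Or.inr hz), h2, h3⟩, fun hz => h1 (Or.inl hz)⟩
      · rintro ⟨⟨h1, h2, h3⟩, h4⟩
        exact ⟨fun hz => hz.elim (fun e => h4 e) h1, h2, h3⟩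
    have hcmem : c ∈ chgB s d B := mem_chgB.mpr ⟨hc, hcls, h⟩
    unfold chg
    rw [h1, h2, Set.ncard_diff_singleton_of_mem hcmem]
    have : 0 < (chgB s d B).ncard := (Set.ncard_pos hB).mpr ⟨c, hcmem⟩
    push_cast
    omega

lemma chg_remove {s : ℕ} {d b : ℤ} {B : Set ℤ} (hA : (chgA s d B).Finite)
    (hB : (chgB s d B).Finite) (hb : b ∈ B) (hcls : (s:ℤ) ∣ b - d) :
    chg s d (B \ {b}) = chg s d B - 1 := by
  have h1 : insert b (B \ {b}) = B := by
    ext z; simp only [Set.mem_insert_iff, Set.mem_diff, Set.mem_singleton_iff]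
    constructor
    · rintro (rfl | ⟨hz, -⟩) <;> assumption
    · intro hz; by_cases hzb : z = b
      · exact Or.inl hzb
      · exact Or.inr ⟨hz, hzb⟩
  have hA' : (chgA s d (B \ {b})).Finite := by
    apply hA.subset; intro z hz
    rw [mem_chgA] at hz ⊢; exact ⟨hz.1.1, hz.2⟩
  have hB' : (chgB s d (B \ {b})).Finite := by
    apply (hB.insert b).subset
    intro z hz
    rw [mem_chgB] at hz
    simp only [Set.mem_diff, Set.mem_singleton_iff, not_and, not_not] at hz
    by_cases hzb : z = b
    · exact Or.inl hzb
    · exact Or.inr (mem_chgB.mpr ⟨fun hc => hzb (hz.1 hc), hz.2⟩)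
  have := chg_insert hA' hB' (show b ∉ B \ {b} by simp) hcls
  rw [h1] at this
  omega

lemma chg_move {s : ℕ} {N M d b : ℤ} {B : Set ℤ} (hg : Good N M B) (hb : b ∈ B)
    (hc : b - (s:ℤ) ∉ B) : chg s d (insert (b - (s:ℤ)) (B \ {b})) = chg s d B := by
  by_cases hcls : (s:ℤ) ∣ b - d
  · have hA' : (chgA s d (B \ {b})).Finite := by
      apply (hg.finA s d).subset; intro z hz
      rw [mem_chgA] at hz ⊢; exact ⟨hz.1.1, hz.2⟩
    have hB' : (chgB s d (B \ {b})).Finite := by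
      apply ((hg.finB s d).insert b).subset
      intro z hz
      rw [mem_chgB] at hz
      simp only [Set.mem_diff, Set.mem_singleton_iff, not_and, not_not] at hz
      by_cases hzb : z = b
      · exact Or.inl hzb
      · exact Or.inr (mem_chgB.mpr ⟨fun hcz => hzb (hz.1 hcz), hz.2⟩)
    rw [chg_insert hA' hB' (fun hm => hc hm.1) (by
      have : b - (s:ℤ) - d = (b - d) - s := by ring
      rw [this]; exact dvd_sub hcls ⟨1, by ring⟩)]
    rw [chg_remove (hg.finA s d) (hg.finB s d) hb hcls]
    ring
  · apply chg_congr
    ext z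
    simp only [Set.mem_inter_iff, Set.mem_insert_iff, Set.mem_diff, Set.mem_singleton_iff,
      cls, Set.mem_setOf_eq]
    constructor
    · rintro ⟨rfl | ⟨hz1, hz2⟩, hz3⟩
      · exfalso
        apply hcls
        have : b - d = (b - (s:ℤ) - d) + s := by ring
        rw [this]; exact dvd_add hz3 ⟨1, by ring⟩
      · exact ⟨hz1, hz3⟩
    · rintro ⟨hz1, hz2⟩
      refine ⟨Or.inr ⟨hz1, ?_⟩, hz2⟩
      rintro rfl
      exact hcls hz2

lemma chg_reflTransGen {s : ℕ} {l c : Partition'}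
    (h : Relation.ReflTransGen (Partition'.RemoveHook s) l c) (d : ℤ) :
    chg s d l.betaSet = chg s d c.betaSet := by
  induction h with
  | refl => rfl
  | tail h1 h2 ih =>
    rw [ih]
    obtain ⟨b, hb, hbs, hm⟩ := h2
    obtain ⟨N, M, hg⟩ := exists_good _
    rw [hm, chg_move hg hb hbs]

lemma chg_shift {s : ℕ} {N M d : ℤ} {B : Set ℤ} (hg : Good N M B) (hs : 0 < s) :
    chg s (d + s) B = chg s d B - 1 := by
  have hclseq : ∀ z : ℤ, (s:ℤ) ∣ z - (d + s) ↔ (s:ℤ) ∣ z - d := by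
    intro z
    constructor <;> intro h
    · have : z - d = (z - (d + s)) + s := by ring
      rw [this]; exact dvd_add h ⟨1, by ring⟩
    · have : z - (d + s) = (z - d) - s := by ring
      rw [this]; exact dvd_sub h ⟨1, by ring⟩
  have hss : (0:ℤ) < s := by exact_mod_cast hs
  have hA : chgA s (d + s) B = chgA s d B \ {d} := by
    ext z
    simp only [mem_chgA, Set.mem_diff, Set.mem_singleton_iff]
    constructor
    · rintro ⟨h1, h2, h3⟩
      exact ⟨⟨h1, (hclseq z).mp h2, by omega⟩, by omega⟩
    · rintro ⟨⟨h1, h2, h3⟩, h4⟩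
      have : (s:ℤ) ≤ z - d := Int.le_of_dvd (by omega) h2
      exact ⟨h1, (hclseq z).mpr h2, by omega⟩
  have hBeq : chgB s (d + s) B = chgB s d B ∪ ({d} ∩ Bᶜ) := by
    ext z
    simp only [mem_chgB, Set.mem_union, Set.mem_inter_iff, Set.mem_singleton_iff,
      Set.mem_compl_iff]
    constructor
    · rintro ⟨h1, h2, h3⟩
      have h2' := (hclseq z).mp h2
      rcases lt_or_ge z d with h | h
      · exact Or.inl ⟨h1, h2', h⟩
      · right
        have hzd : z - d = 0 := by
          by_contra hne
          have : (s:ℤ) ≤ z - d := Int.le_of_dvd (by omega) h2'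
          omega
        exact ⟨by omega, h1⟩
    · rintro (⟨h1, h2, h3⟩ | ⟨rfl, h1⟩)
      · exact ⟨h1, (hclseq z).mpr h2, by omega⟩
      · exact ⟨h1, (hclseq z).mpr ⟨0, by ring⟩, by omega⟩
  by_cases hd : d ∈ B
  · have h1 : ({d} ∩ Bᶜ : Set ℤ) = ∅ := by
      ext z; simp only [Set.mem_inter_iff, Set.mem_singleton_iff, Set.mem_compl_iff,
        Set.mem_empty_iff_false, iff_false, not_and]
      rintro rfl; simpa using hd
    have hdA : d ∈ chgA s d B := mem_chgA.mpr ⟨hd, ⟨0, by ring⟩, le_rfl⟩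
    unfold chg
    rw [hA, hBeq, h1, Set.union_empty,
      Set.ncard_diff_singleton_of_mem hdA]
    have : 0 < (chgA s d B).ncard := (Set.ncard_pos (hg.finA s d)).mpr ⟨d, hdA⟩
    push_cast
    omega
  · have h1 : ({d} ∩ Bᶜ : Set ℤ) = {d} := by
      ext z; simp only [Set.mem_inter_iff, Set.mem_singleton_iff, Set.mem_compl_iff]
      constructor
      · rintro ⟨rfl, -⟩; rfl
      · rintro rfl; exact ⟨rfl, hd⟩
    have h2 : chgA s d B \ {d} = chgA s d B := by
      apply Set.diff_singleton_eq_self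
      intro hmem
      exact hd (mem_chgA.mp hmem).1
    have h3 : chgB s d B ∪ {d} = insert d (chgB s d B) := by
      rw [Set.union_singleton]
    have hdnB : d ∉ chgB s d B := fun hm => by
      have := (mem_chgB.mp hm).2.2; omega
    unfold chg
    rw [hA, hBeq, h1, h2, h3, Set.ncard_insert_of_notMem hdnB (hg.finB s d)]
    push_cast
    ring

lemma chg_shift_mul {s : ℕ} {N M d : ℤ} {B : Set ℤ} (hg : Good N M B) (hs : 0 < s) :
    ∀ k : ℤ, chg s (d + k * s) B = chg s d B - k := by
  intro k
  induction k using Int.induction_on with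
  | zero => simp
  | succ k ih =>
    have h := chg_shift (d := d + k * s) hg hs
    rw [show d + (k + 1 : ℤ) * s = d + k * s + s by ring, h, ih]
    ring
  | pred k ih =>
    have h := chg_shift (d := d + (-k - 1 : ℤ) * s) hg hs
    rw [show d + (-k - 1 : ℤ) * s + s = d + (-(k:ℤ)) * s by ring] at h
    rw [show d + (-(k:ℤ) - 1) * s = d + (-(k:ℤ)-1) * s by ring]
    omega

end Stmt12

namespace Stmt12

lemma core_down {s : ℕ} {c : Partition'} (hcore : Partition'.IsCore s c) {b : ℤ}
    (hb : b ∈ c.betaSet) : b - (s:ℤ) ∈ c.betaSet := by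
  by_contra h
  obtain ⟨m, hm⟩ := step hb h
  exact hcore m hm

lemma core_down_mul {s : ℕ} {c : Partition'} (hcore : Partition'.IsCore s c) {b : ℤ}
    (hb : b ∈ c.betaSet) : ∀ k : ℕ, b - (k:ℤ) * s ∈ c.betaSet := by
  intro k
  induction k with
  | zero => simpa using hb
  | succ k ih =>
    have := core_down hcore ih
    rw [show b - (k:ℤ) * s - s = b - ((k:ℕ)+1:ℤ) * s by ring] at this
    exact_mod_cast this

lemma core_mem {s : ℕ} {N M : ℤ} {c : Partition'} (hs : 0 < s)
    (hcore : Partition'.IsCore s c) (hg : Good N M c.betaSet) (b : ℤ) :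
    b ∈ c.betaSet ↔ 1 ≤ chg s b c.betaSet := by
  have hss : (0:ℤ) < s := by exact_mod_cast hs
  constructor
  · intro hb
    have hBempty : chgB s b c.betaSet = ∅ := by
      rw [Set.eq_empty_iff_forall_notMem]
      intro z hz
      obtain ⟨h1, ⟨k, hk⟩, h3⟩ := mem_chgB.mp hz
      apply h1
      have hk0 : k < 0 := by
        by_contra h
        push_neg at h
        have := mul_nonneg hss.le h
        linarith
      have h4 := core_down_mul hcore hb (-k).toNat
      rw [show b - ((-k).toNat : ℤ) * s = z by
        rw [Int.toNat_of_nonneg (by omega)]; linear_combination -hk] at h4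
      exact h4
    have hbA : b ∈ chgA s b c.betaSet := mem_chgA.mpr ⟨hb, ⟨0, by ring⟩, le_rfl⟩
    have : 0 < (chgA s b c.betaSet).ncard := (Set.ncard_pos (hg.finA s b)).mpr ⟨b, hbA⟩
    unfold chg
    rw [hBempty]
    simp only [Set.ncard_empty]
    push_cast
    omega
  · intro h
    by_contra hb
    have hAempty : chgA s b c.betaSet = ∅ := by
      rw [Set.eq_empty_iff_forall_notMem]
      intro z hz
      obtain ⟨h1, ⟨k, hk⟩, h3⟩ := mem_chgA.mp hz
      apply hb
      have hk0 : 0 ≤ k := by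
        by_contra h
        push_neg at h
        have := mul_neg_of_pos_of_neg hss h
        linarith
      have h4 := core_down_mul hcore h1 k.toNat
      rw [show z - (k.toNat : ℤ) * s = b by
        rw [Int.toNat_of_nonneg hk0]; linear_combination hk] at h4
      exact h4
    unfold chg at h
    rw [hAempty] at h
    simp only [Set.ncard_empty] at h
    have : (0:ℤ) ≤ (chgB s b c.betaSet).ncard := by positivity
    omega

noncomputable def phi (N : ℤ) (B : Set ℤ) : ℤ := ∑ᶠ z ∈ B ∩ Set.Ioi N, id z

lemma phi_lb {N M : ℤ} {B : Set ℤ} (hg : Good N M B) : (N+1)*(-N-1) ≤ phi N B := by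
  have hfin := hg.finite_inter_Ioi N
  rw [phi, finsum_mem_eq_finite_toFinset_sum _ hfin]
  have h1 : ∀ z ∈ hfin.toFinset, N + 1 ≤ id z := by
    intro z hz
    rw [Set.Finite.mem_toFinset] at hz
    have := hz.2
    simp only [Set.mem_Ioi] at this
    simp only [id]
    omega
  calc (N+1)*(-N-1) = hfin.toFinset.card • (N+1) := by
        rw [show hfin.toFinset.card = (B ∩ Set.Ioi N).ncard from
          (Set.ncard_eq_toFinset_card _ _).symm]
        push_cast [nsmul_eq_mul]
        rw [show ((B ∩ Set.Ioi N).ncard : ℤ) = -N-1 from hg.count]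
        ring
    _ ≤ _ := Finset.card_nsmul_le_sum _ _ _ h1

lemma phi_move {s : ℕ} {N M b : ℤ} {B : Set ℤ} (hg : Good N M B) (hb : b ∈ B)
    (hbs : b - (s:ℤ) ∉ B) : phi N (insert (b - (s:ℤ)) (B \ {b})) = phi N B - s := by
  have hfin := hg.finite_inter_Ioi N
  have hg' : Good N M (insert (b - (s:ℤ)) (B \ {b})) := hg.move hb hbs (by positivity)
  have hfin' := hg'.finite_inter_Ioi N
  have hbN : N < b - s := by
    by_contra h
    exact hbs (hg.low (by simp only [Set.mem_Iic]; omega))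
  have hTeq : hfin'.toFinset = insert (b - (s:ℤ)) (hfin.toFinset.erase b) := by
    ext z
    simp only [Set.Finite.mem_toFinset, Finset.mem_insert, Finset.mem_erase,
      Set.mem_inter_iff, Set.mem_insert_iff, Set.mem_diff, Set.mem_singleton_iff, Set.mem_Ioi]
    constructor
    · rintro ⟨rfl | ⟨h1, h2⟩, h3⟩
      · exact Or.inl rfl
      · exact Or.inr ⟨h2, h1, h3⟩
    · rintro (rfl | ⟨h2, h1, h3⟩)
      · exact ⟨Or.inl rfl, hbN⟩
      · exact ⟨Or.inr ⟨h1, h2⟩, h3⟩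
  have hbmem : b ∈ hfin.toFinset := by
    rw [Set.Finite.mem_toFinset]
    refine ⟨hb, ?_⟩
    simp only [Set.mem_Ioi]
    omega
  rw [phi, phi, finsum_mem_eq_finite_toFinset_sum _ hfin, finsum_mem_eq_finite_toFinset_sum _ hfin', hTeq,
    Finset.sum_insert (by
      simp only [Finset.mem_erase, Set.Finite.mem_toFinset, Set.mem_inter_iff]
      rintro ⟨-, h, -⟩
      exact hbs h),
    Finset.sum_erase_eq_sub hbmem]
  simp only [id]
  ring

lemma exists_core_aux {s : ℕ} (hs : 0 < s) (N M : ℤ) :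
    ∀ n : ℕ, ∀ l : Partition', Good N M l.betaSet →
      (phi N l.betaSet ≤ (N+1)*(-N-1) + n) →
      ∃ c, Partition'.HasCore s l c := by
  intro n
  induction n with
  | zero =>
    intro l hg hsum
    refine ⟨l, Relation.ReflTransGen.refl, ?_⟩
    intro m hm
    obtain ⟨b, hb, hbs, hmβ⟩ := hm
    have h1 := phi_move hg hb hbs
    have h2 : Good N M (insert (b - (s:ℤ)) (l.betaSet \ {b})) := hg.move hb hbs (by positivity)
    have h3 := phi_lb h2
    have hss : (0:ℤ) < s := by exact_mod_cast hs
    omega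
  | succ n ih =>
    intro l hg hsum
    by_cases hex : ∃ b ∈ l.betaSet, b - (s:ℤ) ∉ l.betaSet
    · obtain ⟨b, hb, hbs⟩ := hex
      have h2 : Good N M (insert (b - (s:ℤ)) (l.betaSet \ {b})) := hg.move hb hbs (by positivity)
      obtain ⟨m, hmβ⟩ := realize h2
      have hgm : Good N M m.betaSet := hmβ ▸ h2
      have hphi : phi N m.betaSet = phi N l.betaSet - s := by
        rw [hmβ]
        exact phi_move hg hb hbs
      have hss : (0:ℤ) < s := by exact_mod_cast hs
      obtain ⟨c, hchain, hcore⟩ := ih m hgm (by push_cast at hsum ⊢; omega)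
      exact ⟨c, Relation.ReflTransGen.head ⟨b, hb, hbs, hmβ⟩ hchain, hcore⟩
    · refine ⟨l, Relation.ReflTransGen.refl, ?_⟩
      intro m hm
      obtain ⟨b, hb, hbs, -⟩ := hm
      exact hex ⟨b, hb, hbs⟩

lemma exists_core {s : ℕ} (hs : 0 < s) (l : Partition') : ∃ c, Partition'.HasCore s l c := by
  obtain ⟨N, M, hg⟩ := exists_good l
  have hlb := phi_lb hg
  exact exists_core_aux hs N M (phi N l.betaSet - (N+1)*(-N-1)).toNat l hg (by omega)

end Stmt12

namespace Stmt12

lemma dvd_eq_zero {s D : ℤ} (hs : 0 < s) (h : s ∣ D) (h1 : -s < D) (h2 : D < s) : D = 0 := by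
  rcases h with ⟨k, rfl⟩
  rcases lt_trichotomy k 0 with hk | rfl | hk
  · nlinarith
  · ring
  · nlinarith

lemma chg_compute {s t : ℕ} (hs : 1 < s) (ht : 1 < t) (hst : Nat.Coprime s t) (x : ℤ)
    (m : Fin s → Fin t → Bool) (i : Fin s) :
    chg s (x - (s:ℤ)*t + ((i:ℕ)+1)*t)
      (LowSet s t x ∪ {b : ℤ | ∃ (i : Fin s) (j : Fin t), m i j = true ∧
        b = x - (s : ℤ) * t + ((i : ℕ) + 1) * t + ((j : ℕ) + 1) * s})
    = 1 + ((Finset.univ.filter fun j : Fin t => m i j = true).card : ℤ) := by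
  set d : ℤ := x - (s:ℤ)*t + ((i:ℕ)+1)*t with hd
  set B : Set ℤ := LowSet s t x ∪ {b : ℤ | ∃ (i : Fin s) (j : Fin t), m i j = true ∧
        b = x - (s : ℤ) * t + ((i : ℕ) + 1) * t + ((j : ℕ) + 1) * s} with hB
  have hss : (0:ℤ) < s := by exact_mod_cast (by omega : 0 < s)
  have hts : (0:ℤ) < t := by exact_mod_cast (by omega : 0 < t)
  have hcop : IsCoprime (s:ℤ) (t:ℤ) := Int.isCoprime_iff_gcd_eq_one.mpr (by exact_mod_cast hst)
  have hlow : ∀ k : ℤ, 0 ≤ k → d - k * s ∈ B := by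
    intro k hk
    left
    refine ⟨k.toNat, s - 1 - (i:ℕ), ?_⟩
    have h1 : ((s - 1 - (i:ℕ) : ℕ) : ℤ) = (s:ℤ) - 1 - (i:ℕ) := by
      have := i.2
      omega
    rw [Int.toNat_of_nonneg hk, h1, hd]
    ring
  have hBempty : chgB s d B = ∅ := by
    rw [Set.eq_empty_iff_forall_notMem]
    intro z hz
    obtain ⟨h1, ⟨k, hk⟩, h3⟩ := mem_chgB.mp hz
    apply h1
    have hz' : z = d - (-k) * s := by linear_combination hk
    rw [hz']
    apply hlow
    by_contra h
    push_neg at h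
    have : (0:ℤ) ≤ s * k := mul_nonneg hss.le (by omega)
    linarith
  have hAeq : chgA s d B = insert d ((fun j : Fin t => d + ((j:ℕ)+1) * s) ''
      {j : Fin t | m i j = true}) := by
    ext z
    rw [mem_chgA]
    simp only [Set.mem_insert_iff, Set.mem_image, Set.mem_setOf_eq]
    constructor
    · rintro ⟨hzB, ⟨k, hk⟩, hzd⟩
      rcases hzB with ⟨a, b, rfl⟩ | ⟨i', j, hmij, rfl⟩
      · left
        have hdvd : (s:ℤ) ∣ ((s:ℤ) - 1 - (i:ℕ) - (b:ℕ)) * t :=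
          ⟨k + a, by linear_combination hk + hd⟩
        have hD := hcop.dvd_of_dvd_mul_right hdvd
        have hsk : (0:ℤ) ≤ (s:ℤ) * k := by linarith [hk, hzd]
        have hsa : (0:ℤ) ≤ (s:ℤ) * a := mul_nonneg hss.le (by positivity)
        have hDt : (0:ℤ) ≤ ((s:ℤ) - 1 - (i:ℕ) - (b:ℕ)) * t := by
          have h8 : ((s:ℤ) - 1 - (i:ℕ) - (b:ℕ)) * t = (s:ℤ) * k + (s:ℤ) * a := by
            linear_combination hk
          linarith
        have hD0 : (0:ℤ) ≤ (s:ℤ) - 1 - (i:ℕ) - (b:ℕ) := by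
          by_contra h
          push_neg at h
          have := mul_neg_of_neg_of_pos h hts
          linarith
        have hDz : (s:ℤ) - 1 - (i:ℕ) - (b:ℕ) = 0 := by
          apply dvd_eq_zero hss hD (by omega) (by omega)
        have ha0 : (a:ℤ) = 0 := by
          have h5 : (s:ℤ) * k + (a:ℤ) * s = ((s:ℤ) - 1 - (i:ℕ) - (b:ℕ)) * t := by
            linear_combination -hk - hd
          rw [hDz, zero_mul] at h5
          have h6 : (0:ℤ) ≤ (a:ℤ) * s := mul_nonneg (by positivity) hss.le
          have h7 : (a:ℤ) * s = 0 := by linarith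
          rcases mul_eq_zero.mp h7 with h | h
          · exact h
          · omega
        rw [hd]
        linear_combination (-(s:ℤ)) * ha0 + (t:ℤ) * hDz
      · right
        have hdvd : (s:ℤ) ∣ (((i':ℕ):ℤ) - (i:ℕ)) * t :=
          ⟨k - (((j:ℕ):ℤ)+1), by linear_combination hk + hd⟩
        have h4 := hcop.dvd_of_dvd_mul_right hdvd
        have h5 : ((i':ℕ):ℤ) - (i:ℕ) = 0 := by
          apply dvd_eq_zero hss h4
          · have := i'.2; have := i.2; omega
          · have := i'.2; have := i.2; omega
        have : i' = i := by
          apply Fin.ext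
          omega
        subst this
        exact ⟨j, hmij, by rw [hd]; try ring⟩
    · rintro (rfl | ⟨j, hmj, rfl⟩)
      · refine ⟨?_, ⟨0, by ring⟩, le_rfl⟩
        have := hlow 0 le_rfl
        simpa using this
      · have hpos : (0:ℤ) < (((j:ℕ):ℤ)+1) * s := by positivity
        refine ⟨?_, ⟨((j:ℕ):ℤ)+1, by ring⟩, by linarith⟩
        right
        exact ⟨i, j, hmj, by rw [hd]; try ring⟩
  have himg_fin : ((fun j : Fin t => d + ((j:ℕ)+1) * s) '' {j : Fin t | m i j = true}).Finite :=
    Set.Finite.image _ (Set.toFinite _)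
  have hdnot : d ∉ (fun j : Fin t => d + ((j:ℕ)+1) * s) '' {j : Fin t | m i j = true} := by
    rintro ⟨j, -, hj⟩
    simp only at hj
    have hpos : (0:ℤ) < (((j:ℕ):ℤ)+1) * s := by positivity
    have : d + (((j:ℕ):ℤ)+1) * s = d := hj
    linarith
  have hinj : Function.Injective (fun j : Fin t => d + ((j:ℕ)+1) * s) := by
    intro a b hab
    simp only at hab
    have : (((a:ℕ):ℤ)+1) * s = (((b:ℕ):ℤ)+1) * s := by linarith
    have h2 : (((a:ℕ):ℤ)+1) = (((b:ℕ):ℤ)+1) := mul_right_cancel₀ hss.ne' this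
    apply Fin.ext
    omega
  unfold chg
  rw [hAeq, hBempty]
  simp only [Set.ncard_empty]
  rw [Set.ncard_insert_of_notMem hdnot himg_fin,
    Set.ncard_image_of_injective _ hinj,
    show {j : Fin t | m i j = true} = ↑(Finset.univ.filter fun j : Fin t => m i j = true) by
      ext j; simp,
    Set.ncard_coe_finset]
  push_cast
  ring

end Stmt12

namespace Stmt12

lemma exists_rep {s t : ℕ} (hs : 1 < s) (ht : 1 < t) (hst : Nat.Coprime s t) (x : ℤ) (d : ℤ) :
    ∃ (i : Fin s) (k : ℤ), d = (x - (s:ℤ)*t + ((i:ℕ)+1)*t) + k * s := by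
  have hss : (0:ℤ) < s := by exact_mod_cast (by omega : 0 < s)
  have hcop : IsCoprime (s:ℤ) (t:ℤ) := Int.isCoprime_iff_gcd_eq_one.mpr (by exact_mod_cast hst)
  obtain ⟨u, v, huv⟩ := hcop
  have hr0 : 0 ≤ (v * (d - x) - 1) % s := Int.emod_nonneg _ (by omega)
  have hrs : (v * (d - x) - 1) % s < s := Int.emod_lt_of_pos _ hss
  have he : (v * (d - x) - 1) % s = v * (d - x) - 1 - s * ((v * (d - x) - 1) / s) := by
    rw [Int.emod_def]; try ring
  refine ⟨⟨((v * (d - x) - 1) % s).toNat, by omega⟩,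
    (d - x) * u + t * ((v * (d - x) - 1) / s) + t, ?_⟩
  show d = (x - (s:ℤ)*t + (((((v * (d - x) - 1) % s).toNat : ℕ) : ℤ)+1)*t) +
    ((d - x) * u + t * ((v * (d - x) - 1) / s) + t) * s
  rw [Int.toNat_of_nonneg hr0]
  linear_combination (-(t:ℤ)) * he - (d - x) * huv

end Stmt12

namespace Stmt12

lemma master {s t : ℕ} (hs : 1 < s) (ht : 1 < t) (hst : Nat.Coprime s t) (x : ℤ)
    (m n : Fin s → Fin t → Bool) (l p : Partition')
    (hl : l.betaSet = LowSet s t x ∪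
      {b : ℤ | ∃ (i : Fin s) (j : Fin t), m i j = true ∧
        b = x - (s : ℤ) * t + ((i : ℕ) + 1) * t + ((j : ℕ) + 1) * s})
    (hp : p.betaSet = LowSet s t x ∪
      {b : ℤ | ∃ (i : Fin s) (j : Fin t), n i j = true ∧
        b = x - (s : ℤ) * t + ((i : ℕ) + 1) * t + ((j : ℕ) + 1) * s}) :
    (∃ c : Partition', Partition'.HasCore s l c ∧ Partition'.HasCore s p c) ↔
      ∀ i : Fin s, (Finset.univ.filter fun j : Fin t => m i j = true).card =
        (Finset.univ.filter fun j : Fin t => n i j = true).card := by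
  have hs0 : 0 < s := by omega
  have hchgl : ∀ i : Fin s, chg s (x - (s:ℤ)*t + ((i:ℕ)+1)*t) l.betaSet
      = 1 + ((Finset.univ.filter fun j : Fin t => m i j = true).card : ℤ) := by
    intro i; rw [hl]; exact chg_compute hs ht hst x m i
  have hchgp : ∀ i : Fin s, chg s (x - (s:ℤ)*t + ((i:ℕ)+1)*t) p.betaSet
      = 1 + ((Finset.univ.filter fun j : Fin t => n i j = true).card : ℤ) := by
    intro i; rw [hp]; exact chg_compute hs ht hst x n i
  constructor
  · rintro ⟨c, ⟨hc1, -⟩, ⟨hc2, -⟩⟩ i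
    have e1 := chg_reflTransGen hc1 (x - (s:ℤ)*t + ((i:ℕ)+1)*t)
    have e2 := chg_reflTransGen hc2 (x - (s:ℤ)*t + ((i:ℕ)+1)*t)
    rw [hchgl i] at e1
    rw [hchgp i] at e2
    have : 1 + ((Finset.univ.filter fun j : Fin t => m i j = true).card : ℤ)
        = 1 + ((Finset.univ.filter fun j : Fin t => n i j = true).card : ℤ) := by
      rw [e1, e2]
    exact_mod_cast (by omega : ((Finset.univ.filter fun j : Fin t => m i j = true).card : ℤ)
      = ((Finset.univ.filter fun j : Fin t => n i j = true).card : ℤ))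
  · intro h
    obtain ⟨c, hc⟩ := exists_core hs0 l
    obtain ⟨c', hc'⟩ := exists_core hs0 p
    obtain ⟨Nl, Ml, hgl⟩ := exists_good l
    obtain ⟨Np, Mp, hgp⟩ := exists_good p
    have key : ∀ d : ℤ, chg s d c.betaSet = chg s d c'.betaSet := by
      intro d
      obtain ⟨i, k, rfl⟩ := exists_rep hs ht hst x d
      rw [← chg_reflTransGen hc.1, ← chg_reflTransGen hc'.1,
        chg_shift_mul hgl hs0 k, chg_shift_mul hgp hs0 k, hchgl i, hchgp i, h i]
    have hbeq : c.betaSet = c'.betaSet := by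
      obtain ⟨Nc, Mc, hgc⟩ := exists_good c
      obtain ⟨Nc', Mc', hgc'⟩ := exists_good c'
      ext b
      rw [core_mem hs0 hc.2 hgc b, core_mem hs0 hc'.2 hgc' b, key b]
    have : c = c' := betaSet_injective hbeq
    subst this
    exact ⟨c, hc, hc'⟩

end Stmt12


/-- under the pinch-point bijection `θ_x`, matrices give partitions
with the same `s`-core iff they have the same row sums, and the same `t`-core iff
they have the same column sums. -/
theorem stmt12 (s t : ℕ) (hs : 1 < s) (ht : 1 < t) (hst : Nat.Coprime s t) (x : ℤ)
    (m n : Fin s → Fin t → Bool)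
    (hmA : 2 * (((Finset.univ.filter fun p : Fin s × Fin t => m p.1 p.2 = true).card : ℤ))
      = (s : ℤ) * t - s - t - 1 - 2 * x)
    (hnA : 2 * (((Finset.univ.filter fun p : Fin s × Fin t => n p.1 p.2 = true).card : ℤ))
      = (s : ℤ) * t - s - t - 1 - 2 * x)
    (l p : Partition')
    (hl : l.betaSet = LowSet s t x ∪
      {b : ℤ | ∃ (i : Fin s) (j : Fin t), m i j = true ∧
        b = x - (s : ℤ) * t + ((i : ℕ) + 1) * t + ((j : ℕ) + 1) * s})
    (hp : p.betaSet = LowSet s t x ∪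
      {b : ℤ | ∃ (i : Fin s) (j : Fin t), n i j = true ∧
        b = x - (s : ℤ) * t + ((i : ℕ) + 1) * t + ((j : ℕ) + 1) * s}) :
    ((∃ c : Partition', Partition'.HasCore s l c ∧ Partition'.HasCore s p c) ↔
      ∀ i : Fin s, (Finset.univ.filter fun j : Fin t => m i j = true).card =
        (Finset.univ.filter fun j : Fin t => n i j = true).card) ∧
    ((∃ c : Partition', Partition'.HasCore t l c ∧ Partition'.HasCore t p c) ↔
      ∀ j : Fin t, (Finset.univ.filter fun i : Fin s => m i j = true).card =
        (Finset.univ.filter fun i : Fin s => n i j = true).card) := by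
  
  have hsym : Nat.Coprime t s := hst.symm
  constructor
  · exact Stmt12.master hs ht hst x m n l p hl hp
  · have hl' : l.betaSet = LowSet t s x ∪
        {b : ℤ | ∃ (j : Fin t) (i : Fin s), (fun (j : Fin t) (i : Fin s) => m i j) j i = true ∧
          b = x - (t : ℤ) * s + ((j : ℕ) + 1) * s + ((i : ℕ) + 1) * t} := by
      rw [hl]
      congr 1
      · ext z
        constructor
        · rintro ⟨a, b, rfl⟩; exact ⟨b, a, by ring⟩
        · rintro ⟨a, b, rfl⟩; exact ⟨b, a, by ring⟩
      · ext z
        constructor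
        · rintro ⟨i, j, hm, rfl⟩; exact ⟨j, i, hm, by ring⟩
        · rintro ⟨j, i, hm, rfl⟩; exact ⟨i, j, hm, by ring⟩
    have hp' : p.betaSet = LowSet t s x ∪
        {b : ℤ | ∃ (j : Fin t) (i : Fin s), (fun (j : Fin t) (i : Fin s) => n i j) j i = true ∧
          b = x - (t : ℤ) * s + ((j : ℕ) + 1) * s + ((i : ℕ) + 1) * t} := by
      rw [hp]
      congr 1
      · ext z
        constructor
        · rintro ⟨a, b, rfl⟩; exact ⟨b, a, by ring⟩
        · rintro ⟨a, b, rfl⟩; exact ⟨b, a, by ring⟩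
      · ext z
        constructor
        · rintro ⟨i, j, hm, rfl⟩; exact ⟨j, i, hm, by ring⟩
        · rintro ⟨j, i, hm, rfl⟩; exact ⟨i, j, hm, by ring⟩
    exact Stmt12.master ht hs hsym x (fun j i => m i j) (fun j i => n i j) l p hl' hp'
end

section
/- Let s, t be coprime integers greater than 1. For every w in the group W_s × W_t (affine symmetric groups acting on partitions at levels t and s respectively) and every partition λ, the quantity |λ| − |core_s(λ)| − |core_t(λ)| is invariant: it equals |wλ| − |core_s(wλ)| − |core_t(wλ)|. -/
namespace Stmt18

def Bdd (B : Set ℤ) : Prop := (∃ M, ∀ b ∈ B, b ≤ M) ∧ (∃ m, ∀ n ≤ m, n ∈ B)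

def SzSet (B : Set ℤ) : Set (ℤ × ℤ) :=
  {p | (p.2 ∈ B ∧ 0 ≤ p.1 ∧ p.1 ≤ p.2) ∨ (p.2 ∉ B ∧ p.2 < p.1 ∧ p.1 ≤ -1)}

noncomputable def Sz (B : Set ℤ) : ℕ := (SzSet B).ncard

def NP (s : ℕ) (B : Set ℤ) : Set (ℤ × ℤ) :=
  {p | p.1 ∉ B ∧ p.2 ∈ B ∧ p.1 < p.2 ∧ (s : ℤ) ∣ (p.2 - p.1)}

noncomputable def Ninv (s : ℕ) (B : Set ℤ) : ℕ := (NP s B).ncard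

lemma SzSet_finite {B : Set ℤ} (h : Bdd B) : (SzSet B).Finite := by
  obtain ⟨⟨M, hM⟩, ⟨m0, hm0⟩⟩ := h
  apply Set.Finite.subset ((Set.finite_Icc (min m0 (-1)) (max M 0)).prod
    (Set.finite_Icc (min m0 (-1)) (max M 0)))
  rintro ⟨x, y⟩ (⟨hy, hx0, hxy⟩ | ⟨hy, hyx, hx⟩)
  · have := hM y hy
    exact ⟨Set.mem_Icc.2 ⟨by omega, by omega⟩, Set.mem_Icc.2 ⟨by omega, by omega⟩⟩
  · have h1 : m0 < y := by by_contra hc; push_neg at hc; exact hy (hm0 y hc)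
    exact ⟨Set.mem_Icc.2 ⟨by omega, by omega⟩, Set.mem_Icc.2 ⟨by omega, by omega⟩⟩

lemma NP_finite {B : Set ℤ} (h : Bdd B) (s : ℕ) : (NP s B).Finite := by
  obtain ⟨⟨M, hM⟩, ⟨m0, hm0⟩⟩ := h
  apply Set.Finite.subset ((Set.finite_Icc (m0+1) M).prod (Set.finite_Icc (m0+1) M))
  rintro ⟨x, y⟩ ⟨hx, hy, hxy, -⟩
  have h1 : m0 < x := by by_contra hc; push_neg at hc; exact hx (hm0 x hc)
  have h2 := hM y hy
  exact ⟨Set.mem_Icc.2 ⟨by omega, by omega⟩, Set.mem_Icc.2 ⟨by omega, by omega⟩⟩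

lemma col_mem {B : Set ℤ} {n : ℤ} (hn : n ∈ B) :
    (SzSet B ∩ {p | p.2 = n}).ncard = (n + 1).toNat := by
  have he : SzSet B ∩ {p | p.2 = n} = (fun j => (j, n)) '' Set.Icc 0 n := by
    ext ⟨x, y⟩
    simp only [SzSet, Set.mem_inter_iff, Set.mem_setOf_eq, Set.mem_image, Set.mem_Icc,
      Prod.mk.injEq]
    constructor
    · rintro ⟨(⟨hy, h1, h2⟩ | ⟨hy, h1, h2⟩), rfl⟩
      · exact ⟨x, ⟨h1, h2⟩, rfl, rfl⟩
      · exact absurd hn hy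
    · rintro ⟨j, ⟨h1, h2⟩, rfl, rfl⟩
      exact ⟨Or.inl ⟨hn, h1, h2⟩, rfl⟩
  rw [he, Set.ncard_image_of_injective _ (fun a b h => (Prod.mk.injEq .. ▸ h).1),
    ← Finset.coe_Icc, Set.ncard_coe_finset, Int.card_Icc]
  omega

lemma col_notmem {B : Set ℤ} {n : ℤ} (hn : n ∉ B) :
    (SzSet B ∩ {p | p.2 = n}).ncard = (-n - 1).toNat := by
  have he : SzSet B ∩ {p | p.2 = n} = (fun j => (j, n)) '' Set.Icc (n+1) (-1) := by
    ext ⟨x, y⟩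
    simp only [SzSet, Set.mem_inter_iff, Set.mem_setOf_eq, Set.mem_image, Set.mem_Icc,
      Prod.mk.injEq]
    constructor
    · rintro ⟨(⟨hy, h1, h2⟩ | ⟨hy, h1, h2⟩), rfl⟩
      · exact absurd hy hn
      · exact ⟨x, ⟨by omega, h2⟩, rfl, rfl⟩
    · rintro ⟨j, ⟨h1, h2⟩, rfl, rfl⟩
      exact ⟨Or.inr ⟨hn, by omega, h2⟩, rfl⟩
  rw [he, Set.ncard_image_of_injective _ (fun a b h => (Prod.mk.injEq .. ▸ h).1),
    ← Finset.coe_Icc, Set.ncard_coe_finset, Int.card_Icc]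
  omega

/-- signed column count -/
noncomputable def colZ (B : Set ℤ) (n : ℤ) : ℤ := ((SzSet B ∩ {p | p.2 = n}).ncard : ℤ)

lemma colZ_mem {B : Set ℤ} {n : ℤ} (hn : n ∈ B) : colZ B n = max (n+1) 0 := by
  rw [colZ, col_mem hn, Int.toNat_eq_max]

lemma colZ_notmem {B : Set ℤ} {n : ℤ} (hn : n ∉ B) : colZ B n = max (-n-1) 0 := by
  rw [colZ, col_notmem hn, Int.toNat_eq_max]

lemma Bdd.move {B : Set ℤ} (hB : Bdd B) (b c : ℤ) : Bdd (insert c (B \ {b})) := by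
  obtain ⟨⟨M, hM⟩, ⟨m0, hm0⟩⟩ := hB
  refine ⟨⟨max M c, ?_⟩, ⟨min m0 (min b c) - 1, ?_⟩⟩
  · rintro x (rfl | ⟨hx, -⟩)
    · exact le_max_right _ _
    · exact le_trans (hM x hx) (le_max_left _ _)
  · intro n hn
    exact Or.inr ⟨hm0 n (by omega), by simp; omega⟩

lemma sz_decomp {X : Set ℤ} (hX : (SzSet X).Finite) (b c : ℤ) (hbc : b ≠ c) :
    ((SzSet X).ncard : ℤ) = ((SzSet X ∩ {p | p.2 ≠ b ∧ p.2 ≠ c}).ncard : ℤ)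
      + colZ X b + colZ X c := by
  have h1 : SzSet X = (SzSet X ∩ {p | p.2 ≠ b ∧ p.2 ≠ c}) ∪
      ((SzSet X ∩ {p | p.2 = b}) ∪ (SzSet X ∩ {p | p.2 = c})) := by
    ext p; by_cases h2 : p.2 = b <;> by_cases h3 : p.2 = c <;>
      simp [Set.mem_inter_iff, h2, h3] <;> tauto
  have d1 : Disjoint (SzSet X ∩ {p | p.2 = b}) (SzSet X ∩ {p | p.2 = c}) := by
    rw [Set.disjoint_left]; rintro ⟨x, y⟩ ⟨-, h4⟩ ⟨-, h5⟩
    simp only [Set.mem_setOf_eq] at h4 h5; exact hbc (h4 ▸ h5 ▸ rfl)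
  have d2 : Disjoint (SzSet X ∩ {p | p.2 ≠ b ∧ p.2 ≠ c})
      ((SzSet X ∩ {p | p.2 = b}) ∪ (SzSet X ∩ {p | p.2 = c})) := by
    rw [Set.disjoint_union_right]
    constructor <;> rw [Set.disjoint_left] <;> rintro ⟨x, y⟩ ⟨-, h4, h5⟩ ⟨-, h6⟩ <;>
      simp only [Set.mem_setOf_eq] at h4 h5 h6
    · exact h4 h6
    · exact h5 h6
  have f1 := hX.subset (Set.inter_subset_left (t := {p | p.2 ≠ b ∧ p.2 ≠ c}))
  have f2 := hX.subset (Set.inter_subset_left (t := {p | p.2 = b}))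
  have f3 := hX.subset (Set.inter_subset_left (t := {p | p.2 = c}))
  have e : (SzSet X).ncard = (SzSet X ∩ {p | p.2 ≠ b ∧ p.2 ≠ c}).ncard
      + ((SzSet X ∩ {p | p.2 = b}).ncard + (SzSet X ∩ {p | p.2 = c}).ncard) := by
    rw [← Set.ncard_union_eq d1 f2 f3, ← Set.ncard_union_eq d2 f1 (f2.union f3), ← h1]
  rw [e, colZ, colZ]; push_cast; ring

/-- Single move: `Sz` changes by the displacement. -/
lemma sz_move {B : Set ℤ} (hB : Bdd B) {b c : ℤ} (hb : b ∈ B) (hc : c ∉ B) (hcb : c ≠ b) :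
    (Sz (insert c (B \ {b})) : ℤ) = (Sz B : ℤ) + (c - b) := by
  set B' : Set ℤ := insert c (B \ {b}) with hB'
  have hB'bdd : Bdd B' := hB.move b c
  have hfin := SzSet_finite hB
  have hfin' := SzSet_finite hB'bdd
  have hmem : ∀ y : ℤ, y ≠ b → y ≠ c → (y ∈ B' ↔ y ∈ B) := by
    intro y h1 h2
    rw [hB']
    simp only [Set.mem_insert_iff, Set.mem_diff, Set.mem_singleton_iff]
    tauto
  have hrest : SzSet B ∩ {p | p.2 ≠ b ∧ p.2 ≠ c} = SzSet B' ∩ {p | p.2 ≠ b ∧ p.2 ≠ c} := by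
    ext ⟨x, y⟩
    constructor <;> rintro ⟨hp, hy1, hy2⟩ <;>
      refine ⟨?_, hy1, hy2⟩ <;> simp only [Set.mem_setOf_eq] at hy1 hy2 ⊢ <;>
      rcases hp with ⟨m1, m2⟩ | ⟨m1, m2⟩
    · exact Or.inl ⟨(hmem y hy1 hy2).2 m1, m2⟩
    · exact Or.inr ⟨fun hm => m1 ((hmem y hy1 hy2).1 hm), m2⟩
    · exact Or.inl ⟨(hmem y hy1 hy2).1 m1, m2⟩
    · exact Or.inr ⟨fun hm => m1 ((hmem y hy1 hy2).2 hm), m2⟩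
  have hbB' : b ∉ B' := by
    rw [hB']
    simp only [Set.mem_insert_iff, Set.mem_diff, Set.mem_singleton_iff]
    tauto
  have hcB' : c ∈ B' := by rw [hB']; exact Set.mem_insert _ _
  have e1 := sz_decomp hfin b c (Ne.symm hcb)
  have e2 := sz_decomp hfin' b c (Ne.symm hcb)
  rw [colZ_mem hb, colZ_notmem hc] at e1
  rw [colZ_notmem hbB', colZ_mem hcB'] at e2
  show ((SzSet B').ncard : ℤ) = ((SzSet B).ncard : ℤ) + (c - b)
  rw [e1, e2, ← hrest]
  omega

end Stmt18
namespace Stmt18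
open Partition'

/-- the beta function of a partition -/
def bf (l : Partition') : ℕ → ℤ := fun r => (l.parts r : ℤ) - (r + 1)

lemma betaSet_eq (l : Partition') : l.betaSet = Set.range (bf l) := rfl

lemma bf_strictAnti (l : Partition') : StrictAnti (bf l) := by
  apply strictAnti_nat_of_succ_lt
  intro r
  have := l.antitone (Nat.le_succ r)
  simp only [Nat.succ_eq_add_one] at this
  simp only [bf]
  push_cast
  omega

lemma bf_le (l : Partition') {r r' : ℕ} (h : r ≤ r') : bf l r' ≤ bf l r - (r' - r) := by
  have h2 := l.antitone h
  simp only [bf]; push_cast; omega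

lemma parts_eventually_zero (l : Partition') : ∃ N : ℕ, ∀ r ≥ N, l.parts r = 0 := by
  refine ⟨(l.parts.support.sup id) + 1, fun r hr => ?_⟩
  by_contra h
  have hmem : r ∈ l.parts.support := Finsupp.mem_support_iff.2 h
  have := Finset.le_sup (f := id) hmem
  simp only [id] at this
  omega

lemma bdd_betaSet (l : Partition') : Bdd l.betaSet := by
  obtain ⟨N, hN⟩ := parts_eventually_zero l
  constructor
  · refine ⟨(l.parts 0 : ℤ) - 1, ?_⟩
    rintro b ⟨r, rfl⟩
    have := l.antitone (Nat.zero_le r)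
    simp only [bf]
    push_cast
    omega
  · refine ⟨-(N : ℤ) - 1, fun n hn => ?_⟩
    refine ⟨(-n - 1).toNat, ?_⟩
    have h1 : ((-n-1).toNat : ℤ) = -n - 1 := Int.toNat_of_nonneg (by omega)
    have h2 : (-n-1).toNat ≥ N := by omega
    show (l.parts ((-n-1).toNat) : ℤ) - (((-n-1).toNat : ℤ) + 1) = n
    rw [hN _ h2]
    push_cast [h1]
    omega

lemma mem_betaSet_neg (l : Partition') (n : ℤ) (N : ℕ) (hN : ∀ r ≥ N, l.parts r = 0)
    (hn : n ≤ -(N:ℤ) - 1) : n ∈ l.betaSet := by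
  refine ⟨(-n - 1).toNat, ?_⟩
  have h1 : ((-n-1).toNat : ℤ) = -n - 1 := Int.toNat_of_nonneg (by omega)
  have h2 : (-n-1).toNat ≥ N := by omega
  show (l.parts ((-n-1).toNat) : ℤ) - (((-n-1).toNat : ℤ) + 1) = n
  rw [hN _ h2]
  push_cast [h1]
  omega

/-- `size` as a finite range sum -/
lemma size_eq_sum_range (l : Partition') (N : ℕ) (hN : ∀ r ≥ N, l.parts r = 0) :
    l.size = ∑ r ∈ Finset.range N, l.parts r := by
  rw [size, Finsupp.sum]
  apply Finset.sum_subset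
  · intro r hr
    rw [Finsupp.mem_support_iff] at hr
    rw [Finset.mem_range]
    by_contra h
    exact hr (hN r (by omega))
  · intro r _ hr
    rw [Finsupp.mem_support_iff, not_not] at hr
    exact hr

theorem size_eq_sz (l : Partition') : (l.size : ℤ) = Sz l.betaSet := by
  generalize hn : l.size = n
  induction n using Nat.strong_induction_on generalizing l with
  | _ n ih =>
  subst hn
  by_cases h0 : l.size = 0
  · -- all parts are zero
    have hz : ∀ r, l.parts r = 0 := by
      intro r
      by_contra h
      have h1 : l.size = ∑ r ∈ Finset.range (r+1+(l.parts.support.sup id)),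
          l.parts r := by
        apply size_eq_sum_range
        intro r' hr'
        by_contra h'
        have := Finset.le_sup (f := id) (Finsupp.mem_support_iff.2 h')
        simp only [id] at this
        omega
      rw [h0] at h1
      have h2 : l.parts r = 0 := by
        have := Finset.sum_eq_zero_iff.1 h1.symm r (Finset.mem_range.2 (by omega))
        exact this
      exact h h2
    have hbeta : l.betaSet = {n : ℤ | n < 0} := by
      ext n
      constructor
      · rintro ⟨r, rfl⟩
        simp only [bf, hz, Set.mem_setOf_eq]
        push_cast
        omega
      · intro hn
        simp only [Set.mem_setOf_eq] at hn
        exact mem_betaSet_neg l n 0 (fun r _ => hz r) (by push_cast; omega)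
    have : SzSet l.betaSet = ∅ := by
      ext ⟨x, y⟩
      simp only [SzSet, hbeta, Set.mem_setOf_eq, Set.mem_empty_iff_false, iff_false]
      rintro (⟨h1, h2, h3⟩ | ⟨h1, h2, h3⟩) <;> omega
    rw [h0, Sz, this, Set.ncard_empty]
  · -- find last nonzero part
    have hA : l.parts.support.Nonempty := by
      by_contra h
      rw [Finset.not_nonempty_iff_eq_empty] at h
      exact h0 (by rw [size, Finsupp.sum, h, Finset.sum_empty])
    set r0 := l.parts.support.max' hA with hr0
    have hr0mem : r0 ∈ l.parts.support := l.parts.support.max'_mem hA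
    have hp0 : l.parts r0 ≠ 0 := Finsupp.mem_support_iff.1 hr0mem
    have hsucc : l.parts (r0 + 1) = 0 := by
      by_contra h
      have := l.parts.support.le_max' _ (Finsupp.mem_support_iff.2 h)
      omega
    -- new partition with one box removed
    have hanti : ∀ ⦃i j : ℕ⦄, i ≤ j →
        (Finsupp.update l.parts r0 (l.parts r0 - 1)) j ≤
        (Finsupp.update l.parts r0 (l.parts r0 - 1)) i := by
      intro i j hij
      simp only [Finsupp.coe_update]
      rcases eq_or_ne j r0 with rfl | hj
      · rcases eq_or_ne i r0 with rfl | hi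
        · simp
        · rw [Function.update_self, Function.update_of_ne hi]
          have := l.antitone hij
          have h2 : i ≤ r0 := hij
          omega
      · rw [Function.update_of_ne hj]
        rcases eq_or_ne i r0 with rfl | hi
        · rw [Function.update_self]
          have hj2 : r0 + 1 ≤ j := by omega
          have := l.antitone hj2
          rw [hsucc] at this
          omega
        · rw [Function.update_of_ne hi]
          exact l.antitone hij
    set l' : Partition' := ⟨Finsupp.update l.parts r0 (l.parts r0 - 1), hanti⟩ with hl'
    have hl'parts : ∀ r, l'.parts r = if r = r0 then l.parts r0 - 1 else l.parts r := by
      intro r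
      simp only [hl', Finsupp.coe_update]
      rcases eq_or_ne r r0 with rfl | h
      · rw [Function.update_self, if_pos rfl]
      · rw [Function.update_of_ne h, if_neg h]
    -- size decreases by one
    obtain ⟨N, hN⟩ := parts_eventually_zero l
    have hN' : ∀ r ≥ max N (r0+1), l'.parts r = 0 := by
      intro r hr
      rw [hl'parts, if_neg (by omega)]
      exact hN r (by omega)
    have hsize : l.size = l'.size + 1 := by
      rw [size_eq_sum_range l (max N (r0+1)) (fun r hr => hN r (by omega)),
        size_eq_sum_range l' (max N (r0+1)) hN']
      have hmem : r0 ∈ Finset.range (max N (r0+1)) := Finset.mem_range.2 (by omega)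
      rw [← Finset.add_sum_erase _ _ hmem, ← Finset.add_sum_erase _ _ hmem]
      have : ∑ x ∈ (Finset.range (max N (r0+1))).erase r0, l'.parts x =
          ∑ x ∈ (Finset.range (max N (r0+1))).erase r0, l.parts x := by
        apply Finset.sum_congr rfl
        intro x hx
        rw [hl'parts, if_neg (Finset.ne_of_mem_erase hx)]
      rw [this, hl'parts, if_pos rfl]
      omega
    -- beta sets
    set b := bf l r0 with hb
    have hbmem : b ∈ l.betaSet := ⟨r0, rfl⟩
    have hbf' : ∀ r, bf l' r = if r = r0 then b - 1 else bf l r := by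
      intro r
      simp only [bf, hl'parts]
      rcases eq_or_ne r r0 with rfl | h
      · rw [if_pos rfl, if_pos rfl, hb]
        simp only [bf]
        omega
      · rw [if_neg h, if_neg h]
    have hbnot : b - 1 ∉ l.betaSet := by
      rintro ⟨r, hr⟩
      replace hr : bf l r = b - 1 := hr
      rcases le_or_gt r r0 with h | h
      · have hlt : bf l r0 < bf l r ∨ r = r0 := by
          rcases eq_or_ne r r0 with rfl | hne
          · exact Or.inr rfl
          · exact Or.inl ((bf_strictAnti l) (by omega))
        rcases hlt with hlt | rfl
        · omega
        · omega
      · have h1 : r0 + 1 ≤ r := h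
        have h3 : bf l (r0+1) = -(r0:ℤ) - 2 := by
          simp only [bf, hsucc]; push_cast; omega
        have h4 : bf l r ≤ -(r0:ℤ) - 2 := by
          have := bf_le l h1; push_cast at this; omega
        have h5 : b - 1 ≥ (1:ℤ) - (r0:ℤ) - 2 := by
          rw [hb]; simp only [bf]
          have : 1 ≤ l.parts r0 := by omega
          push_cast
          omega
        omega
    have hbeta' : l'.betaSet = insert (b - 1) (l.betaSet \ {b}) := by
      rw [betaSet_eq, betaSet_eq]
      ext n
      simp only [Set.mem_range, Set.mem_insert_iff, Set.mem_diff, Set.mem_singleton_iff]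
      constructor
      · rintro ⟨r, rfl⟩
        rw [hbf']
        rcases eq_or_ne r r0 with rfl | h
        · rw [if_pos rfl]; exact Or.inl rfl
        · rw [if_neg h]
          exact Or.inr ⟨⟨r, rfl⟩, fun he => h ((bf_strictAnti l).injective (he.trans hb))⟩
      · rintro (rfl | ⟨⟨r, rfl⟩, hne⟩)
        · exact ⟨r0, by rw [hbf', if_pos rfl]⟩
        · refine ⟨r, by rw [hbf', if_neg (fun he => hne (by rw [he, hb]))]⟩
    have hb1 : b - 1 ≠ b := by omega
    have := sz_move (bdd_betaSet l) hbmem hbnot hb1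
    rw [← hbeta'] at this
    have ihl' := ih l'.size (by omega) l' rfl
    rw [hsize]
    push_cast
    rw [ihl', this]
    omega

end Stmt18
namespace Stmt18
open Partition'

lemma lt_of_dvd_ne {s d : ℤ} (hs : 0 < s) (hd : 0 < d) (h : s ∣ d) (hne : d ≠ s) : s < d :=
  lt_of_le_of_ne (Int.le_of_dvd hd h) (Ne.symm hne)

lemma mem_insert_diff {B : Set ℤ} {b c n : ℤ} :
    n ∈ insert c (B \ {b}) ↔ n = c ∨ (n ∈ B ∧ n ≠ b) := by
  simp [Set.mem_insert_iff, Set.mem_diff, Set.mem_singleton_iff]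

lemma ninv_remove {B : Set ℤ} (hB : Bdd B) {s : ℕ} (hs : 0 < s) {b : ℤ}
    (hb : b ∈ B) (hb' : b - (s:ℤ) ∉ B) :
    Ninv s B = Ninv s (insert (b - (s:ℤ)) (B \ {b})) + 1 := by
  have hsz : (0:ℤ) < s := by exact_mod_cast hs
  set B' : Set ℤ := insert (b - (s:ℤ)) (B \ {b}) with hB'
  have hmemB' : ∀ n : ℤ, n ∈ B' ↔ n = b - (s:ℤ) ∨ (n ∈ B ∧ n ≠ b) := fun n => mem_insert_diff
  have hpt : (b - (s:ℤ), b) ∈ NP s B := ⟨hb', hb, by omega, ⟨1, by ring⟩⟩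
  set g : ℤ × ℤ → ℤ × ℤ := fun p =>
    if p.2 = b then (p.1, b - (s:ℤ)) else if p.1 = b - (s:ℤ) then (b, p.2) else p with hg
  set g' : ℤ × ℤ → ℤ × ℤ := fun q =>
    if q.2 = b - (s:ℤ) then (q.1, b) else if q.1 = b then (b - (s:ℤ), q.2) else q with hg'
  have gev1 : ∀ x : ℤ, g (x, b) = (x, b - (s:ℤ)) := by intro x; simp [hg]
  have gev2 : ∀ y : ℤ, y ≠ b → g (b - (s:ℤ), y) = (b, y) := by
    intro y h; simp [hg, h]
  have gev3 : ∀ x y : ℤ, y ≠ b → x ≠ b - (s:ℤ) → g (x, y) = (x, y) := by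
    intro x y h1 h2; simp [hg, h1, h2]
  have g'ev1 : ∀ x : ℤ, g' (x, b - (s:ℤ)) = (x, b) := by intro x; simp [hg']
  have g'ev2 : ∀ y : ℤ, y ≠ b - (s:ℤ) → g' (b, y) = (b - (s:ℤ), y) := by
    intro y h; simp [hg', h]
  have g'ev3 : ∀ x y : ℤ, y ≠ b - (s:ℤ) → x ≠ b → g' (x, y) = (x, y) := by
    intro x y h1 h2; simp [hg', h1, h2]
  -- facts about the domain
  have domfacts : ∀ x y : ℤ, (x, y) ∈ NP s B \ {(b - (s:ℤ), b)} →
      x ∉ B ∧ y ∈ B ∧ x < y ∧ (s:ℤ) ∣ y - x ∧ (y = b → x < b - (s:ℤ)) := by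
    rintro x y ⟨⟨hx, hy, hxy, hd⟩, hne⟩
    simp only [Set.mem_singleton_iff, Prod.mk.injEq] at hne
    simp only at hx hy hxy hd
    refine ⟨hx, hy, hxy, hd, ?_⟩
    intro hyb
    subst hyb
    have hxne : x ≠ y - (s:ℤ) := fun he => hne ⟨he, rfl⟩
    have := lt_of_dvd_ne hsz (by omega) hd (fun he => hxne (by omega))
    omega
  have hmapsTo : Set.MapsTo g (NP s B \ {(b - (s:ℤ), b)}) (NP s B') := by
    rintro ⟨x, y⟩ hp
    obtain ⟨hx, hy, hxy, hd, hcase⟩ := domfacts x y hp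
    obtain ⟨k, hk⟩ := hd
    by_cases hyb : y = b
    · subst hyb
      have hlt := hcase rfl
      rw [gev1]
      refine ⟨?_, (hmemB' _).2 (Or.inl rfl), by simpa using hlt, ⟨k - 1, by rw [mul_sub]; omega⟩⟩
      rw [hmemB']
      push_neg
      exact ⟨by omega, fun h => absurd h hx⟩
    · by_cases hxbs : x = b - (s:ℤ)
      · have hd2 : y - b = (s:ℤ) * (k - 1) := by rw [mul_sub]; omega
        have hyb2 : b < y := by
          rcases lt_or_ge b y with h | h
          · exact h
          · exfalso
            have hne2 : y - b ≠ 0 := fun he => hyb (by omega)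
            have : (s:ℤ) ≤ b - y := Int.le_of_dvd (by omega) ⟨-(k-1), by rw [mul_neg, ← hd2]; ring⟩
            omega
        rw [hxbs, gev2 y hyb]
        refine ⟨?_, (hmemB' _).2 (Or.inr ⟨hy, hyb⟩), by simpa using hyb2, ⟨k - 1, by omega⟩⟩
        rw [hmemB']
        push_neg
        exact ⟨by omega, fun _ => rfl⟩
      · rw [gev3 x y hyb hxbs]
        refine ⟨?_, (hmemB' _).2 (Or.inr ⟨hy, hyb⟩), hxy, ⟨k, hk⟩⟩
        rw [hmemB']
        push_neg
        exact ⟨hxbs, fun h => absurd h hx⟩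
  have hleftInv : ∀ p ∈ (NP s B \ {(b - (s:ℤ), b)}), g' (g p) = p := by
    rintro ⟨x, y⟩ hp
    obtain ⟨hx, hy, hxy, hd, hcase⟩ := domfacts x y hp
    by_cases hyb : y = b
    · subst hyb
      rw [gev1, g'ev1]
    · by_cases hxbs : x = b - (s:ℤ)
      · have hyb2 : y ≠ b - (s:ℤ) := by
          intro he; rw [hxbs, he] at hxy; exact lt_irrefl _ hxy
        rw [hxbs, gev2 y hyb, g'ev2 y hyb2]
      · rw [gev3 x y hyb hxbs, g'ev3 x y (fun h => hb' (h ▸ hy)) (fun h => hx (h ▸ hb))]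
  have hinjOn : Set.InjOn g (NP s B \ {(b - (s:ℤ), b)}) := by
    intro p hp q hq heq
    rw [← hleftInv p hp, ← hleftInv q hq, heq]
  have hsurjOn : Set.SurjOn g (NP s B \ {(b - (s:ℤ), b)}) (NP s B') := by
    rintro ⟨x, y⟩ ⟨hx, hy, hxy, hd⟩
    simp only at hx hy hxy hd
    rw [hmemB'] at hx hy
    push_neg at hx
    obtain ⟨hx1, hx2⟩ := hx
    obtain ⟨k, hk⟩ := hd
    by_cases hybs : y = b - (s:ℤ)
    · have hxB : x ∉ B := by
        intro h
        have := hx2 h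
        omega
      refine ⟨(x, b), ⟨⟨hxB, hb, by omega, ⟨k + 1, by rw [mul_add]; omega⟩⟩, ?_⟩, ?_⟩
      · simp only [Set.mem_singleton_iff, Prod.mk.injEq]
        rintro ⟨h1, -⟩
        exact hx1 h1
      · rw [gev1, hybs]
    · rcases hy with h | ⟨hyB, hyb⟩
      · exact absurd h hybs
      by_cases hxb : x = b
      · refine ⟨(b - (s:ℤ), y), ⟨⟨hb', hyB, by omega, ⟨k + 1, by rw [mul_add]; omega⟩⟩, ?_⟩, ?_⟩
        · simp only [Set.mem_singleton_iff, Prod.mk.injEq]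
          rintro ⟨-, h2⟩
          exact hyb h2
        · rw [gev2 y hyb, hxb]
      · have hxB : x ∉ B := by
          intro h
          exact hxb (hx2 h)
        refine ⟨(x, y), ⟨⟨hxB, hyB, hxy, ⟨k, hk⟩⟩, ?_⟩, ?_⟩
        · simp only [Set.mem_singleton_iff, Prod.mk.injEq]
          rintro ⟨h1, -⟩
          exact hx1 h1
        · exact gev3 x y hyb hx1
  have hbij : Set.BijOn g (NP s B \ {(b - (s:ℤ), b)}) (NP s B') := ⟨hmapsTo, hinjOn, hsurjOn⟩
  have hfin := NP_finite hB s
  have h1 : (NP s B \ {(b - (s:ℤ), b)}).ncard + 1 = (NP s B).ncard :=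
    Set.ncard_diff_singleton_add_one hpt hfin
  have h2 : (NP s B').ncard = (NP s B \ {(b - (s:ℤ), b)}).ncard := by
    rw [← hbij.image_eq, Set.ncard_image_of_injOn hinjOn]
  rw [Ninv, Ninv, h2]
  omega

end Stmt18
namespace Stmt18
open Partition'

lemma sa_decay {g : ℕ → ℤ} (h : ∀ r, g (r+1) < g r) {r r' : ℕ} (hrr : r ≤ r') :
    g r' ≤ g r - ((r':ℤ) - r) := by
  obtain ⟨k, rfl⟩ := Nat.exists_eq_add_of_le hrr
  induction k with
  | zero => simp
  | succ k ih =>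
    have h1 := h (r + k)
    have h2 := ih (by omega)
    have h3 : r + (k + 1) = (r + k) + 1 := by omega
    rw [h3]
    push_cast
    push_cast at h2
    omega

lemma remove_exists {s : ℕ} (hs : 0 < s) (c : Partition') {b : ℤ}
    (hb : b ∈ c.betaSet) (hb' : b - (s:ℤ) ∉ c.betaSet) :
    ∃ m : Partition', m.betaSet = insert (b - (s:ℤ)) (c.betaSet \ {b}) := by
  obtain ⟨r0, hr0⟩ := hb
  replace hr0 : bf c r0 = b := hr0
  have hsz : (0:ℤ) < s := by exact_mod_cast hs
  have hsa := bf_strictAnti c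
  have hstep : ∀ r, bf c (r+1) < bf c r := fun r => hsa (by omega)
  have hnot : ∀ r, bf c r ≠ b - (s:ℤ) := fun r he => hb' ⟨r, he⟩
  have hex : ∃ r, bf c r < b - (s:ℤ) := by
    refine ⟨r0 + s, ?_⟩
    have := sa_decay hstep (le_add_right (le_refl r0) : r0 ≤ r0 + s)
    have hne := hnot (r0 + s)
    push_cast at this
    omega
  set r1 := Nat.find hex with hr1def
  have hf1 : bf c r1 < b - (s:ℤ) := Nat.find_spec hex
  have hgt : ∀ r, r < r1 → b - (s:ℤ) < bf c r := by
    intro r hr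
    have h1 := Nat.find_min hex hr
    have h2 := hnot r
    omega
  have hr01 : r0 < r1 := by
    by_contra h
    push_neg at h
    have := hsa.antitone h
    rw [hr0] at this
    omega
  set g : ℕ → ℤ := fun r =>
    if r < r0 then bf c r
    else if r + 1 < r1 then bf c (r+1)
    else if r + 1 = r1 then b - (s:ℤ)
    else bf c r with hg
  have hgval : ∀ r, g r = if r < r0 then bf c r
      else if r + 1 < r1 then bf c (r+1)
      else if r + 1 = r1 then b - (s:ℤ)
      else bf c r := fun r => rfl
  have gev_lt : ∀ r, r < r0 → g r = bf c r := by
    intro r h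
    rw [hgval, if_pos h]
  have gev_mid : ∀ r, r0 ≤ r → r + 1 < r1 → g r = bf c (r+1) := by
    intro r h1 h2
    rw [hgval, if_neg (by omega : ¬ r < r0), if_pos h2]
  have gev_eq : ∀ r, r0 ≤ r → r + 1 = r1 → g r = b - (s:ℤ) := by
    intro r h1 h2
    rw [hgval, if_neg (by omega : ¬ r < r0), if_neg (by omega : ¬ r + 1 < r1), if_pos h2]
  have gev_ge : ∀ r, r1 ≤ r → g r = bf c r := by
    intro r h
    rw [hgval, if_neg (by omega : ¬ r < r0), if_neg (by omega : ¬ r + 1 < r1),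
      if_neg (by omega : ¬ r + 1 = r1)]
  have hgstep : ∀ r, g (r+1) < g r := by
    intro r
    rcases lt_trichotomy (r+1) r0 with hA | hA | hA
    · rw [gev_lt r (by omega), gev_lt (r+1) hA]
      exact hstep r
    · rw [gev_lt r (by omega)]
      have hfr : bf c (r+1) < bf c r := hstep r
      by_cases hB : (r+1) + 1 < r1
      · rw [gev_mid (r+1) (by omega) hB]
        have := hstep (r+1)
        omega
      · rw [gev_eq (r+1) (by omega) (by omega)]
        rw [← hA] at hr0
        omega
    · rcases lt_trichotomy (r+2) r1 with hC | hC | hC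
      · rw [gev_mid r (by omega) (by omega), gev_mid (r+1) (by omega) (by omega)]
        exact hstep (r+1)
      · rw [gev_mid r (by omega) (by omega), gev_eq (r+1) (by omega) (by omega)]
        exact hgt (r+1) (by omega)
      · rcases lt_trichotomy (r+1) r1 with hD | hD | hD
        · omega
        · rw [gev_eq r (by omega) hD, gev_ge (r+1) (by omega)]
          rw [← hD] at hf1
          exact hf1
        · rw [gev_ge r (by omega), gev_ge (r+1) (by omega)]
          exact hstep r
  obtain ⟨N, hN⟩ := parts_eventually_zero c
  set K := max r1 N with hK
  have hgK : ∀ r, K ≤ r → g r = -(r:ℤ) - 1 := by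
    intro r hr
    rw [gev_ge r (by omega)]
    simp only [bf, hN r (by omega)]
    push_cast
    ring
  have hglb : ∀ r : ℕ, -(r:ℤ) - 1 ≤ g r := by
    intro r
    rcases le_or_gt K r with h | h
    · rw [hgK r h]
    · have := sa_decay hgstep (le_of_lt h)
      rw [hgK K (le_refl K)] at this
      omega
  have hsupp : (Function.support fun r => (g r + r + 1).toNat).Finite := by
    apply Set.Finite.subset (Set.finite_Iio K)
    intro r hr
    simp only [Function.mem_support, ne_eq, Int.toNat_eq_zero, not_le] at hr
    by_contra h
    simp only [Set.mem_Iio, not_lt] at h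
    rw [hgK r h] at hr
    omega
  set mparts : ℕ →₀ ℕ := Finsupp.ofSupportFinite _ hsupp with hmp
  have hmpval : ∀ r, mparts r = (g r + r + 1).toNat := fun r => rfl
  have hanti : ∀ ⦃i j : ℕ⦄, i ≤ j → mparts j ≤ mparts i := by
    intro i j hij
    rw [hmpval, hmpval]
    apply Int.toNat_le_toNat
    have := sa_decay hgstep hij
    omega
  refine ⟨⟨mparts, hanti⟩, ?_⟩
  have hbfm : ∀ r, (mparts r : ℤ) - ((r:ℤ) + 1) = g r := by
    intro r
    rw [hmpval, Int.toNat_of_nonneg (by have := hglb r; omega)]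
    ring
  have hrange : Set.range g = insert (b - (s:ℤ)) (c.betaSet \ {b}) := by
    ext n
    simp only [Set.mem_range, Set.mem_insert_iff, Set.mem_diff, Set.mem_singleton_iff]
    constructor
    · rintro ⟨r, rfl⟩
      rcases lt_trichotomy r r0 with h1 | h1 | h1
      · rw [gev_lt r h1]
        exact Or.inr ⟨⟨r, rfl⟩, fun he => absurd (hsa.injective (he.trans hr0.symm)) (by omega)⟩
      · subst h1
        by_cases h2 : r + 1 < r1
        · rw [gev_mid r (le_refl r) h2]
          exact Or.inr ⟨⟨r+1, rfl⟩, fun he => absurd (hsa.injective (he.trans hr0.symm)) (by omega)⟩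
        · rw [gev_eq r (le_refl r) (by omega)]
          exact Or.inl rfl
      · rcases lt_trichotomy (r+1) r1 with h2 | h2 | h2
        · rw [gev_mid r (by omega) h2]
          exact Or.inr ⟨⟨r+1, rfl⟩, fun he => absurd (hsa.injective (he.trans hr0.symm)) (by omega)⟩
        · rw [gev_eq r (by omega) h2]
          exact Or.inl rfl
        · rw [gev_ge r (by omega)]
          exact Or.inr ⟨⟨r, rfl⟩, fun he => absurd (hsa.injective (he.trans hr0.symm)) (by omega)⟩
    · rintro (rfl | ⟨⟨r, rfl⟩, hne⟩)
      · refine ⟨r1 - 1, ?_⟩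
        rw [gev_eq (r1-1) (by omega) (by omega)]
      · replace hne : r ≠ r0 := fun he => hne (by rw [he]; exact hr0)
        rcases lt_trichotomy r r0 with h | h | h
        · exact ⟨r, gev_lt r h⟩
        · exact absurd h hne
        · rcases lt_or_ge r r1 with h2 | h2
          · refine ⟨r - 1, ?_⟩
            rw [gev_mid (r-1) (by omega) (by omega)]
            congr 1
            omega
          · exact ⟨r, gev_ge r h2⟩
  rw [← hrange]
  ext n
  simp only [betaSet, Set.mem_range]
  constructor
  · rintro ⟨r, rfl⟩
    exact ⟨r, (hbfm r).symm⟩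
  · rintro ⟨r, rfl⟩
    exact ⟨r, hbfm r⟩

lemma isCore_ninv_zero {s : ℕ} (hs : 0 < s) {c : Partition'} (hc : IsCore s c) :
    Ninv s c.betaSet = 0 := by
  have hsz : (0:ℤ) < s := by exact_mod_cast hs
  classical
  rw [Ninv, Set.ncard_eq_zero (NP_finite (bdd_betaSet c) s)]
  by_contra h
  rw [← Ne, ← Set.nonempty_iff_ne_empty] at h
  obtain ⟨⟨x, y⟩, hx, hy, hxy, hd⟩ := h
  simp only at hx hy hxy hd
  obtain ⟨j, hj⟩ := hd
  have hj1 : 1 ≤ j := by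
    rcases le_or_gt 1 j with h | h
    · exact h
    · exfalso
      have h0 : (s:ℤ) * j ≤ (s:ℤ) * 0 := mul_le_mul_of_nonneg_left (by omega) (by omega)
      simp only [mul_zero] at h0
      omega
  have hex : ∃ k : ℕ, 1 ≤ k ∧ y - (k:ℤ) * s ∉ c.betaSet := by
    refine ⟨j.toNat, by omega, ?_⟩
    have : ((j.toNat : ℤ)) = j := Int.toNat_of_nonneg (by omega)
    rw [this]
    have : y - (s:ℤ) * j = x := by omega
    rw [mul_comm, this]
    exact hx
  set k0 := Nat.find hex with hk0
  obtain ⟨hk01, hk0mem⟩ := Nat.find_spec hex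
  have hb : y - ((k0:ℤ) - 1) * s ∈ c.betaSet := by
    rcases Nat.lt_or_ge 1 k0 with h | h
    · have h2 : y - ((k0 - 1 : ℕ):ℤ) * s ∈ c.betaSet := by
        by_contra hcon
        exact Nat.find_min hex (show k0 - 1 < k0 by omega) ⟨by omega, hcon⟩
      have hcast : ((k0 - 1 : ℕ):ℤ) = (k0:ℤ) - 1 := by omega
      rwa [hcast] at h2
    · have h1 : (k0:ℤ) - 1 = 0 := by omega
      rw [h1]
      simpa using hy
  have hbs : (y - ((k0:ℤ) - 1) * s) - (s:ℤ) ∉ c.betaSet := by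
    have : (y - ((k0:ℤ) - 1) * s) - (s:ℤ) = y - (k0:ℤ) * s := by ring
    rw [this]
    exact hk0mem
  obtain ⟨m, hm⟩ := remove_exists hs c hb hbs
  exact hc m ⟨_, hb, hbs, hm⟩

lemma removeHook_step {s : ℕ} (hs : 0 < s) {a b : Partition'} (h : RemoveHook s a b) :
    (a.size : ℤ) = b.size + s ∧ Ninv s a.betaSet = Ninv s b.betaSet + 1 := by
  obtain ⟨x, hx, hx', hbeta⟩ := h
  have hsz : (0:ℤ) < s := by exact_mod_cast hs
  constructor
  · have hmove := sz_move (bdd_betaSet a) hx hx' (by omega)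
    rw [← hbeta] at hmove
    rw [size_eq_sz a, size_eq_sz b, hmove]
    ring
  · have := ninv_remove (bdd_betaSet a) hs hx hx'
    rw [← hbeta] at this
    exact this

lemma hasCore_size {s : ℕ} (hs : 0 < s) {l c : Partition'} (h : HasCore s l c) :
    (l.size : ℤ) = c.size + s * Ninv s l.betaSet := by
  obtain ⟨hchain, hcore⟩ := h
  have hzero := isCore_ninv_zero hs hcore
  have key : (l.size:ℤ) - s * Ninv s l.betaSet = (c.size:ℤ) - s * Ninv s c.betaSet := by
    clear hcore hzero
    induction hchain with
    | refl => rfl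
    | tail hxy hstep ih =>
      obtain ⟨h1, h2⟩ := removeHook_step hs hstep
      rw [ih, h1, h2]
      push_cast
      ring
  rw [hzero] at key
  push_cast at key
  omega

end Stmt18
namespace Stmt18
open Partition'

section Gen

variable {s t : ℕ} (i : ℤ)

def wg (s t : ℕ) (i : ℤ) : ℤ → ℤ := fun n =>
  if (s : ℤ) ∣ (n + ((s : ℤ) - 1) * ((t : ℤ) - 1) / 2 - (i - 1) * t) then n + t
  else if (s : ℤ) ∣ (n + ((s : ℤ) - 1) * ((t : ℤ) - 1) / 2 - i * t) then n - t
  else n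

/-- condition for moving up -/
def C1 (s t : ℕ) (i : ℤ) (n : ℤ) : Prop :=
  (s : ℤ) ∣ (n + ((s : ℤ) - 1) * ((t : ℤ) - 1) / 2 - (i - 1) * t)

/-- condition for moving down -/
def C2 (s t : ℕ) (i : ℤ) (n : ℤ) : Prop :=
  (s : ℤ) ∣ (n + ((s : ℤ) - 1) * ((t : ℤ) - 1) / 2 - i * t)

lemma hndvd (hs : 1 < s) (hst : Nat.Coprime s t) : ¬ (s:ℤ) ∣ (t:ℤ) := by
  intro h
  have h2 : s ∣ t := Int.ofNat_dvd.1 h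
  have h3 : s ∣ Nat.gcd s t := Nat.dvd_gcd dvd_rfl h2
  rw [Nat.Coprime.gcd_eq_one hst] at h3
  have := Nat.le_of_dvd one_pos h3
  omega

lemma c12 (hs : 1 < s) (hst : Nat.Coprime s t) (n : ℤ) : C1 s t i n → C2 s t i n → False := by
  intro h1 h2
  apply hndvd hs hst
  have := dvd_sub h1 h2
  have he : (n + ((s : ℤ) - 1) * ((t : ℤ) - 1) / 2 - (i - 1) * t)
      - (n + ((s : ℤ) - 1) * ((t : ℤ) - 1) / 2 - i * t) = t := by ring
  rwa [he] at this

lemma c11 (hs : 1 < s) (hst : Nat.Coprime s t) (n : ℤ) : C1 s t i n → C1 s t i (n + t) → False := by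
  intro h1 h2
  apply hndvd hs hst
  have := dvd_sub h2 h1
  have he : (n + t + ((s : ℤ) - 1) * ((t : ℤ) - 1) / 2 - (i - 1) * t)
      - (n + ((s : ℤ) - 1) * ((t : ℤ) - 1) / 2 - (i - 1) * t) = t := by ring
  rwa [he] at this

lemma c2shift (n : ℤ) : C2 s t i (n + t) ↔ C1 s t i n := by
  unfold C1 C2
  constructor <;> intro h <;> [skip; skip] <;> convert h using 1 <;> ring

lemma c1shift (n : ℤ) : C1 s t i (n - t) ↔ C2 s t i n := by
  unfold C1 C2
  constructor <;> intro h <;> convert h using 1 <;> ring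

lemma cmod {x y : ℤ} (h : (s:ℤ) ∣ y - x) :
    (C1 s t i x ↔ C1 s t i y) ∧ (C2 s t i x ↔ C2 s t i y) := by
  unfold C1 C2
  constructor <;> constructor <;> intro h2
  · have := dvd_add h2 h
    convert this using 1 <;> [rfl; ring]
  · have := dvd_sub h2 h
    convert this using 1 <;> [rfl; ring]
  · have := dvd_add h2 h
    convert this using 1 <;> [rfl; ring]
  · have := dvd_sub h2 h
    convert this using 1 <;> [rfl; ring]

lemma wev1 {n : ℤ} (h : C1 s t i n) : wg s t i n = n + t := by
  unfold C1 at h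
  rw [wg, if_pos h]

lemma wev2 {n : ℤ} (h1 : ¬ C1 s t i n) (h2 : C2 s t i n) : wg s t i n = n - t := by
  unfold C1 at h1
  unfold C2 at h2
  rw [wg, if_neg h1, if_pos h2]

lemma wev3 {n : ℤ} (h1 : ¬ C1 s t i n) (h2 : ¬ C2 s t i n) : wg s t i n = n := by
  unfold C1 at h1
  unfold C2 at h2
  rw [wg, if_neg h1, if_neg h2]

lemma wcase (n : ℤ) : (wg s t i n = n + t ∧ C1 s t i n) ∨
    (wg s t i n = n - t ∧ ¬ C1 s t i n ∧ C2 s t i n) ∨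
    (wg s t i n = n ∧ ¬ C1 s t i n ∧ ¬ C2 s t i n) := by
  by_cases h1 : C1 s t i n
  · exact Or.inl ⟨wev1 i h1, h1⟩
  · by_cases h2 : C2 s t i n
    · exact Or.inr (Or.inl ⟨wev2 i h1 h2, h1, h2⟩)
    · exact Or.inr (Or.inr ⟨wev3 i h1 h2, h1, h2⟩)

lemma winv (hs : 1 < s) (hst : Nat.Coprime s t) (n : ℤ) : wg s t i (wg s t i n) = n := by
  by_cases h1 : C1 s t i n
  · rw [wev1 i h1]
    have hn1 : ¬ C1 s t i (n + t) := fun h => c11 i hs hst n h1 h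
    have hn2 : C2 s t i (n + t) := (c2shift i n).2 h1
    rw [wev2 i hn1 hn2]
    ring
  · by_cases h2 : C2 s t i n
    · rw [wev2 i h1 h2]
      have hc1 : C1 s t i (n - t) := (c1shift i n).2 h2
      rw [wev1 i hc1]
      ring
    · rw [wev3 i h1 h2, wev3 i h1 h2]

lemma winvol (hs : 1 < s) (hst : Nat.Coprime s t) : Function.Involutive (wg s t i) := fun n => winv i hs hst n

lemma wmem (hs : 1 < s) (hst : Nat.Coprime s t) (B : Set ℤ) (n : ℤ) : n ∈ (wg s t i) '' B ↔ wg s t i n ∈ B := by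
  constructor
  · rintro ⟨b, hb, rfl⟩
    rwa [winv i hs hst b]
  · intro h
    exact ⟨wg s t i n, h, winv i hs hst n⟩

lemma wdt (n : ℤ) : (t:ℤ) ∣ wg s t i n - n := by
  rcases wcase i n with ⟨h, -⟩ | ⟨h, -⟩ | ⟨h, -⟩ <;> rw [h]
  · simp
  · exact ⟨-1, by ring⟩
  · simp

lemma wBdd (hs : 1 < s) (hst : Nat.Coprime s t) {B : Set ℤ} (hB : Bdd B) : Bdd ((wg s t i) '' B) := by
  obtain ⟨⟨M, hM⟩, ⟨m0, hm0⟩⟩ := hB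
  constructor
  · refine ⟨M + t, ?_⟩
    rintro x ⟨b, hb, rfl⟩
    have := hM b hb
    rcases wcase i b with ⟨h, -⟩ | ⟨h, -⟩ | ⟨h, -⟩ <;> rw [h] <;> omega
  · refine ⟨m0 - t, fun n hn => ?_⟩
    rw [wmem i hs hst]
    apply hm0
    rcases wcase i n with ⟨h, -⟩ | ⟨h, -⟩ | ⟨h, -⟩ <;> rw [h] <;> omega

lemma wup_iff (ht : 1 < t) {n : ℤ} : wg s t i n = n + t ↔ C1 s t i n := by
  constructor
  · intro h
    rcases wcase i n with ⟨h2, hc⟩ | ⟨h2, -, -⟩ | ⟨h2, -, -⟩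
    · exact hc
    · rw [h] at h2; exfalso; omega
    · rw [h] at h2; exfalso; omega
  · exact wev1 i

lemma wdn_iff (ht : 1 < t) {n : ℤ} : wg s t i n = n - t ↔ (¬ C1 s t i n ∧ C2 s t i n) := by
  constructor
  · intro h
    rcases wcase i n with ⟨h2, hc⟩ | ⟨h2, hc⟩ | ⟨h2, hc⟩
    · rw [h] at h2; exfalso; omega
    · exact hc
    · rw [h] at h2; exfalso; omega
  · exact fun h => wev2 i h.1 h.2

end Gen
end Stmt18
namespace Stmt18
open Partition'

section Gen2

variable {s t : ℕ}

lemma weq (i : ℤ) {x y : ℤ} (h : (s:ℤ) ∣ y - x) :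
    wg s t i y - wg s t i x = y - x := by
  obtain ⟨hc1, hc2⟩ := cmod i h
  rcases wcase i x with ⟨hx, hcx⟩ | ⟨hx, hcx1, hcx2⟩ | ⟨hx, hcx1, hcx2⟩
  · rw [hx, wev1 i (hc1.1 hcx)]
    ring
  · rw [hx, wev2 i (fun h => hcx1 (hc1.2 h)) (hc2.1 hcx2)]
    ring
  · rw [hx, wev3 i (fun h => hcx1 (hc1.2 h)) (fun h => hcx2 (hc2.2 h))]

lemma gen_ninv_s (hs : 1 < s) (hst : Nat.Coprime s t) (i : ℤ) {B : Set ℤ} :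
    Ninv s ((wg s t i) '' B) = Ninv s B := by
  set w := wg s t i with hw
  have wi : Function.Injective w := (winvol i hs hst).injective
  set ww : ℤ × ℤ → ℤ × ℤ := fun p => (w p.1, w p.2) with hww
  have hbij : Set.BijOn ww (NP s B) (NP s (w '' B)) := by
    refine ⟨?_, ?_, ?_⟩
    · rintro ⟨x, y⟩ ⟨hx, hy, hlt, hd⟩
      simp only at hx hy hlt hd
      have he : wg s t i y - wg s t i x = y - x := weq i hd
      refine ⟨?_, ⟨y, hy, rfl⟩, ?_, ?_⟩
      · show wg s t i x ∉ w '' B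
        rw [hw, wmem i hs hst, winv i hs hst]
        exact hx
      · show wg s t i x < wg s t i y
        omega
      · show (s:ℤ) ∣ wg s t i y - wg s t i x
        rw [he]
        exact hd
    · intro p _ q _ heq
      have h1 : w p.1 = w q.1 := congrArg Prod.fst heq
      have h2 : w p.2 = w q.2 := congrArg Prod.snd heq
      exact Prod.ext (wi h1) (wi h2)
    · rintro ⟨x, y⟩ ⟨hx, hy, hlt, hd⟩
      simp only at hx hy hlt hd
      rw [hw, wmem i hs hst] at hx hy
      have he : wg s t i y - wg s t i x = y - x := weq i hd
      refine ⟨(wg s t i x, wg s t i y), ⟨hx, hy, by omega, by simp only; rw [he]; exact hd⟩, ?_⟩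
      show (w (wg s t i x), w (wg s t i y)) = (x, y)
      rw [hw, winv i hs hst, winv i hs hst]
  have himg := hbij.image_eq
  rw [Ninv, Ninv, ← himg, Set.ncard_image_of_injOn hbij.injOn]

end Gen2
end Stmt18
namespace Stmt18

lemma sz_moves (d : ℤ) (hd : d ≠ 0) (F : Finset ℤ) (B : Set ℤ) (hB : Bdd B)
    (h1 : ∀ x ∈ F, x ∈ B) (h2 : ∀ x ∈ F, x + d ∉ B)
    (h3 : ∀ x ∈ F, ∀ y ∈ F, x + d ≠ y) :
    Bdd ((B \ ↑F) ∪ (fun x => x + d) '' ↑F) ∧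
    (Sz ((B \ ↑F) ∪ (fun x => x + d) '' ↑F) : ℤ) = Sz B + d * F.card := by
  induction F using Finset.induction_on with
  | empty =>
    constructor
    · simpa using hB
    · simp
  | @insert a F ha ih =>
    have h1' : ∀ x ∈ F, x ∈ B := fun x hx => h1 x (Finset.mem_insert_of_mem hx)
    have h2' : ∀ x ∈ F, x + d ∉ B := fun x hx => h2 x (Finset.mem_insert_of_mem hx)
    have h3' : ∀ x ∈ F, ∀ y ∈ F, x + d ≠ y := fun x hx y hy =>
      h3 x (Finset.mem_insert_of_mem hx) y (Finset.mem_insert_of_mem hy)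
    obtain ⟨hBdd1, hSz1⟩ := ih h1' h2' h3'
    set B1 : Set ℤ := (B \ ↑F) ∪ (fun x => x + d) '' ↑F with hB1
    have hmemB1 : ∀ n : ℤ, n ∈ B1 ↔ ((n ∈ B ∧ n ∉ F) ∨ ∃ x ∈ F, x + d = n) := by
      intro n
      rw [hB1]
      simp only [Set.mem_union, Set.mem_diff, Finset.mem_coe, Set.mem_image]
    have haB1 : a ∈ B1 := by
      rw [hmemB1]
      exact Or.inl ⟨h1 a (Finset.mem_insert_self a F), ha⟩
    have hadB1 : a + d ∉ B1 := by
      rw [hmemB1]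
      push_neg
      constructor
      · intro hadB
        exact absurd hadB (h2 a (Finset.mem_insert_self a F))
      · intro x hx he
        have : x = a := by omega
        rw [this] at hx
        exact ha hx
    have hset : (B \ ↑(insert a F)) ∪ (fun x => x + d) '' ↑(insert a F)
        = insert (a + d) (B1 \ {a}) := by
      ext n
      rw [Set.mem_insert_iff, Set.mem_diff, Set.mem_singleton_iff, hmemB1]
      simp only [Set.mem_union, Set.mem_diff, Finset.coe_insert, Set.mem_insert_iff,
        Finset.mem_coe, Set.mem_image, Finset.mem_insert]
      constructor
      · rintro (⟨hb, hf⟩ | ⟨x, (rfl | hx), he⟩)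
        · push_neg at hf
          exact Or.inr ⟨Or.inl ⟨hb, hf.2⟩, hf.1⟩
        · exact Or.inl he.symm
        · refine Or.inr ⟨Or.inr ⟨x, hx, he⟩, ?_⟩
          rw [← he]
          exact h3 x (Finset.mem_insert_of_mem hx) a (Finset.mem_insert_self a F)
      · rintro (rfl | ⟨(⟨hb, hf⟩ | ⟨x, hx, he⟩), hna⟩)
        · exact Or.inr ⟨a, Or.inl rfl, rfl⟩
        · exact Or.inl ⟨hb, fun hc => hc.elim (fun h => hna h) (fun h => hf h)⟩
        · exact Or.inr ⟨x, Or.inr hx, he⟩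
    have hmv := sz_move hBdd1 haB1 hadB1 (by omega : a + d ≠ a)
    rw [hset]
    refine ⟨hBdd1.move a (a + d), ?_⟩
    rw [hmv, hSz1, Finset.card_insert_of_notMem ha]
    push_cast
    ring

end Stmt18
namespace Stmt18

variable {s t : ℕ}

/-- beads moving up under `wg` -/
def UpD (s t : ℕ) (i : ℤ) (B : Set ℤ) : Set ℤ := {x | C1 s t i x ∧ x ∈ B ∧ x + t ∉ B}

/-- beads moving down under `wg` -/
def DnD (s t : ℕ) (i : ℤ) (B : Set ℤ) : Set ℤ := {y | C2 s t i y ∧ y ∈ B ∧ y - t ∉ B}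

lemma upD_finite (i : ℤ) {B : Set ℤ} (hB : Bdd B) : (UpD s t i B).Finite := by
  obtain ⟨⟨M, hM⟩, ⟨m0, hm0⟩⟩ := hB
  apply Set.Finite.subset (Set.finite_Icc (m0 - t) M)
  rintro x ⟨-, hxB, hxt⟩
  have h1 := hM x hxB
  have h2 : m0 < x + t := by by_contra hc; push_neg at hc; exact hxt (hm0 _ hc)
  exact Set.mem_Icc.2 ⟨by omega, h1⟩

lemma dnD_finite (i : ℤ) {B : Set ℤ} (hB : Bdd B) : (DnD s t i B).Finite := by
  obtain ⟨⟨M, hM⟩, ⟨m0, hm0⟩⟩ := hB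
  apply Set.Finite.subset (Set.finite_Icc m0 M)
  rintro y ⟨-, hyB, hyt⟩
  have h1 := hM y hyB
  have h2 : m0 < y - t := by by_contra hc; push_neg at hc; exact hyt (hm0 _ hc)
  exact Set.mem_Icc.2 ⟨by omega, h1⟩

lemma gen_sz (hs : 1 < s) (ht : 1 < t) (hst : Nat.Coprime s t) (i : ℤ) {B : Set ℤ}
    (hB : Bdd B) :
    (Sz ((wg s t i) '' B) : ℤ)
      = Sz B + t * ((UpD s t i B).ncard : ℤ) - t * ((DnD s t i B).ncard : ℤ) := by
  classical
  have htz : (0:ℤ) < t := by exact_mod_cast (by omega : 0 < t)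
  set Fu : Finset ℤ := (upD_finite i hB).toFinset with hFudef
  set Fd : Finset ℤ := (dnD_finite i hB).toFinset with hFddef
  have hFu : ∀ x, x ∈ Fu ↔ x ∈ UpD s t i B := fun x => Set.Finite.mem_toFinset _
  have hFd : ∀ x, x ∈ Fd ↔ x ∈ DnD s t i B := fun x => Set.Finite.mem_toFinset _
  have hFuc : (↑Fu : Set ℤ) = UpD s t i B := Set.Finite.coe_toFinset _
  have hFdc : (↑Fd : Set ℤ) = DnD s t i B := Set.Finite.coe_toFinset _
  -- step 1 : move the up-beads
  obtain ⟨hBdd1, hSz1⟩ := sz_moves (t:ℤ) (by omega) Fu B hB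
    (fun x hx => ((hFu x).1 hx).2.1)
    (fun x hx => ((hFu x).1 hx).2.2)
    (by
      intro x hx y hy he
      have hcx := ((hFu x).1 hx).1
      have hcy := ((hFu y).1 hy).1
      have hcy2 : C2 s t i y := by rw [← he]; exact (c2shift i x).2 hcx
      exact c12 i hs hst y hcy hcy2)
  set B1 : Set ℤ := (B \ ↑Fu) ∪ (fun x => x + (t:ℤ)) '' ↑Fu with hB1
  have hmem1 : ∀ n : ℤ, n ∈ B1 ↔ ((n ∈ B ∧ n ∉ UpD s t i B) ∨ n - t ∈ UpD s t i B) := by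
    intro n
    rw [hB1]
    simp only [Set.mem_union, Set.mem_diff, Set.mem_image, hFuc]
    constructor
    · rintro (⟨h1, h2⟩ | ⟨x, hx, he⟩)
      · exact Or.inl ⟨h1, h2⟩
      · exact Or.inr (by rw [show n - (t:ℤ) = x by omega]; exact hx)
    · rintro (⟨h1, h2⟩ | h)
      · exact Or.inl ⟨h1, h2⟩
      · exact Or.inr ⟨n - t, h, by ring⟩
  -- step 2 : move the down-beads
  obtain ⟨hBdd2, hSz2⟩ := sz_moves (-(t:ℤ)) (by omega) Fd B1 hBdd1
    (by
      intro y hy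
      obtain ⟨hcy, hyB, hyt⟩ := (hFd y).1 hy
      rw [hmem1]
      refine Or.inl ⟨hyB, ?_⟩
      rintro ⟨hcy', -, -⟩
      exact c12 i hs hst y hcy' hcy)
    (by
      intro y hy
      obtain ⟨hcy, hyB, hyt⟩ := (hFd y).1 hy
      rw [show y + -(t:ℤ) = y - t by ring, hmem1]
      push_neg
      constructor
      · intro h
        exact absurd h hyt
      · rintro ⟨hc1, -, -⟩
        have hc2 : C2 s t i (y - t - t + t) := (c2shift i (y - t - t)).2 hc1
        rw [show y - (t:ℤ) - t + t = y - t by ring] at hc2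
        exact c12 i hs hst (y - t) ((c1shift i y).2 hcy) hc2)
    (by
      intro y hy y' hy' he
      obtain ⟨hcy, -, -⟩ := (hFd y).1 hy
      obtain ⟨hcy', -, -⟩ := (hFd y').1 hy'
      have hc1 : C1 s t i y' := by
        rw [← he, show y + -(t:ℤ) = y - t by ring]
        exact (c1shift i y).2 hcy
      exact c12 i hs hst y' hc1 hcy')
  set B2 : Set ℤ := (B1 \ ↑Fd) ∪ (fun x => x + -(t:ℤ)) '' ↑Fd with hB2
  have hmem2 : ∀ n : ℤ, n ∈ B2 ↔
      ((((n ∈ B ∧ n ∉ UpD s t i B) ∨ n - t ∈ UpD s t i B) ∧ n ∉ DnD s t i B)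
        ∨ n + t ∈ DnD s t i B) := by
    intro n
    rw [hB2]
    simp only [Set.mem_union, Set.mem_diff, Set.mem_image, hFdc]
    constructor
    · rintro (⟨h1, h2⟩ | ⟨y, hy, he⟩)
      · exact Or.inl ⟨(hmem1 n).1 h1, h2⟩
      · exact Or.inr (by rw [show n + (t:ℤ) = y by omega]; exact hy)
    · rintro (⟨h1, h2⟩ | h)
      · exact Or.inl ⟨(hmem1 n).2 h1, h2⟩
      · exact Or.inr ⟨n + t, h, by ring⟩
  have himg : (wg s t i) '' B = B2 := by
    ext n
    rw [wmem i hs hst, hmem2]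
    rcases wcase i n with ⟨he, hc1⟩ | ⟨he, hc1, hc2⟩ | ⟨he, hc1, hc2⟩ <;> rw [he]
    · have f1 : ¬ C2 s t i n := fun h => c12 i hs hst n hc1 h
      have f2 : C2 s t i (n + t) := (c2shift i n).2 hc1
      have f3 : ¬ C1 s t i (n - t) := fun h => f1 ((c1shift i n).1 h)
      have hDnnt : n + t ∈ DnD s t i B ↔ (n + t ∈ B ∧ n ∉ B) := by
        constructor
        · rintro ⟨-, h1, h2⟩
          exact ⟨h1, by rwa [show n + (t:ℤ) - t = n by ring] at h2⟩
        · rintro ⟨h1, h2⟩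
          exact ⟨f2, h1, by rwa [show n + (t:ℤ) - t = n by ring]⟩
      have hUpn : n ∈ UpD s t i B ↔ (n ∈ B ∧ n + t ∉ B) :=
        ⟨fun h => ⟨h.2.1, h.2.2⟩, fun ⟨a, b⟩ => ⟨hc1, a, b⟩⟩
      have hUpnt : n - t ∉ UpD s t i B := fun h => f3 h.1
      have hDnn : n ∉ DnD s t i B := fun h => f1 h.1
      tauto
    · have g1 : C1 s t i (n - t) := (c1shift i n).2 hc2
      have g2 : ¬ C2 s t i (n + t) := fun h => hc1 ((c2shift i n).1 h)
      have hDnn : n ∈ DnD s t i B ↔ (n ∈ B ∧ n - t ∉ B) :=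
        ⟨fun h => ⟨h.2.1, h.2.2⟩, fun ⟨a, b⟩ => ⟨hc2, a, b⟩⟩
      have hUpn : n ∉ UpD s t i B := fun h => hc1 h.1
      have hUpnt : n - t ∈ UpD s t i B ↔ (n - t ∈ B ∧ n ∉ B) := by
        constructor
        · rintro ⟨-, a, b⟩
          exact ⟨a, by rwa [show n - (t:ℤ) + t = n by ring] at b⟩
        · rintro ⟨a, b⟩
          exact ⟨g1, a, by rwa [show n - (t:ℤ) + t = n by ring]⟩
      have hDnnt : n + t ∉ DnD s t i B := fun h => g2 h.1
      tauto
    · have hUpn : n ∉ UpD s t i B := fun h => hc1 h.1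
      have hDnn : n ∉ DnD s t i B := fun h => hc2 h.1
      have hUpnt : n - t ∉ UpD s t i B := fun h => hc2 ((c1shift i n).1 h.1)
      have hDnnt : n + t ∉ DnD s t i B := fun h => hc1 ((c2shift i n).1 h.1)
      tauto
  have hcardu : (UpD s t i B).ncard = Fu.card :=
    Set.ncard_eq_toFinset_card _ (upD_finite i hB)
  have hcardd : (DnD s t i B).ncard = Fd.card :=
    Set.ncard_eq_toFinset_card _ (dnD_finite i hB)
  rw [himg, hSz2, hSz1, hcardu, hcardd]
  push_cast
  ring

end Stmt18
namespace Stmt18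

variable {s t : ℕ}

/-- destroyed pairs -/
def DstOf (s t : ℕ) (i : ℤ) (X : Set ℤ) : Set (ℤ × ℤ) :=
  {p | p ∈ NP t X ∧ p.2 = p.1 + t ∧ C1 s t i p.1}

lemma dstOf_subset (i : ℤ) (X : Set ℤ) : DstOf s t i X ⊆ NP t X := fun p hp => hp.1

lemma dstOf_eq_image (ht : 1 < t) (i : ℤ) (X : Set ℤ) :
    DstOf s t i X = (fun x => (x, x + (t:ℤ))) '' {x | C1 s t i x ∧ x ∉ X ∧ x + t ∈ X} := by
  ext ⟨x, y⟩
  simp only [DstOf, NP, Set.mem_setOf_eq, Set.mem_image, Prod.mk.injEq]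
  constructor
  · rintro ⟨⟨hx, hy, hlt, hd⟩, he, hc⟩
    exact ⟨x, ⟨hc, hx, he ▸ hy⟩, rfl, he.symm⟩
  · rintro ⟨z, ⟨hc, hz, hzt⟩, rfl, rfl⟩
    exact ⟨⟨hz, hzt, by omega, ⟨1, by ring⟩⟩, rfl, hc⟩

lemma wmaps (hs : 1 < s) (ht : 1 < t) (hst : Nat.Coprime s t) (i : ℤ) (X : Set ℤ) :
    Set.MapsTo (fun p : ℤ × ℤ => (wg s t i p.1, wg s t i p.2))
      (NP t X \ DstOf s t i X) (NP t ((wg s t i) '' X) \ DstOf s t i ((wg s t i) '' X)) := by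
  have wi : Function.Injective (wg s t i) := (winvol i hs hst).injective
  rintro ⟨x, y⟩ ⟨⟨hx, hy, hlt, hd⟩, hnd⟩
  simp only at hx hy hlt hd
  have h2 : x + t ≤ y := by
    have := Int.le_of_dvd (by omega) hd
    omega
  have hbx : x - t ≤ wg s t i x ∧ wg s t i x ≤ x + t := by
    rcases wcase i x with ⟨h, -⟩ | ⟨h, -⟩ | ⟨h, -⟩ <;> rw [h] <;> omega
  have hby : y - t ≤ wg s t i y ∧ wg s t i y ≤ y + t := by
    rcases wcase i y with ⟨h, -⟩ | ⟨h, -⟩ | ⟨h, -⟩ <;> rw [h] <;> omega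
  have hdw : (t:ℤ) ∣ wg s t i y - wg s t i x := by
    have d1 := wdt (s := s) (t := t) i x
    have d2 := wdt (s := s) (t := t) i y
    have he : wg s t i y - wg s t i x
        = (wg s t i y - y) + (y - x) - (wg s t i x - x) := by ring
    rw [he]
    exact dvd_sub (dvd_add d2 hd) d1
  have horder : wg s t i x < wg s t i y := by
    by_contra hc
    push_neg at hc
    have hne : wg s t i x ≠ wg s t i y := fun he => (by omega : x ≠ y) (wi he)
    have hgap : 0 < wg s t i x - wg s t i y := by omega
    have hle : (t:ℤ) ≤ wg s t i x - wg s t i y :=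
      Int.le_of_dvd hgap (by have := dvd_neg.2 hdw; simpa using this)
    have heq1 : wg s t i x = x + t := by omega
    have heq2 : y = x + t := by omega
    have hc1x : C1 s t i x := (wup_iff i ht).1 heq1
    exact hnd ⟨⟨hx, hy, hlt, hd⟩, by simp only; omega, hc1x⟩
  constructor
  · refine ⟨?_, ⟨y, hy, rfl⟩, horder, hdw⟩
    rw [wmem i hs hst, winv i hs hst]
    exact hx
  · rintro ⟨-, he2, hc1w⟩
    simp only at he2 hc1w
    rcases wcase i x with ⟨hex, hcx⟩ | ⟨hex, hcx1, hcx2⟩ | ⟨hex, hcx1, hcx2⟩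
    · rw [hex] at hc1w
      exact c11 i hs hst x hcx hc1w
    · rw [hex] at he2
      rcases wcase i y with ⟨hey, -⟩ | ⟨hey, hcy1, hcy2⟩ | ⟨hey, -⟩
      · rw [hey] at he2
        omega
      · rw [hey] at he2
        have hyx : y = x + t := by omega
        rw [hyx] at hcy2
        exact hcx1 ((c2shift i x).1 hcy2)
      · rw [hey] at he2
        omega
    · rw [hex] at hc1w
      exact absurd ((wup_iff i ht).2 hc1w) (by rw [hex]; omega)

lemma wimg_invol (hs : 1 < s) (hst : Nat.Coprime s t) (i : ℤ) (B : Set ℤ) :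
    (wg s t i) '' ((wg s t i) '' B) = B := by
  ext n
  rw [wmem i hs hst, wmem i hs hst, winv i hs hst]

lemma gen_ninv_t (hs : 1 < s) (ht : 1 < t) (hst : Nat.Coprime s t) (i : ℤ) {B : Set ℤ}
    (hB : Bdd B) :
    (Ninv t ((wg s t i) '' B) : ℤ)
      = Ninv t B + ((UpD s t i B).ncard : ℤ) - ((DnD s t i B).ncard : ℤ) := by
  have wi : Function.Injective (wg s t i) := (winvol i hs hst).injective
  have wwi : Function.Injective (fun p : ℤ × ℤ => (wg s t i p.1, wg s t i p.2)) := by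
    intro p q h
    exact Prod.ext (wi (congrArg Prod.fst h)) (wi (congrArg Prod.snd h))
  have hfin := NP_finite hB t
  have hBdd' := wBdd i hs hst hB
  have hfin' := NP_finite hBdd' t
  -- the bijection between the off-diagonal parts
  have hbij : Set.BijOn (fun p : ℤ × ℤ => (wg s t i p.1, wg s t i p.2))
      (NP t B \ DstOf s t i B)
      (NP t ((wg s t i) '' B) \ DstOf s t i ((wg s t i) '' B)) := by
    refine ⟨wmaps hs ht hst i B, wwi.injOn, ?_⟩
    intro q hq
    have h2 := wmaps hs ht hst i ((wg s t i) '' B) hq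
    rw [wimg_invol hs hst i B] at h2
    refine ⟨(wg s t i q.1, wg s t i q.2), h2, ?_⟩
    show (wg s t i (wg s t i q.1), wg s t i (wg s t i q.2)) = q
    rw [winv i hs hst, winv i hs hst]
  have hmid : (NP t B \ DstOf s t i B).ncard
      = (NP t ((wg s t i) '' B) \ DstOf s t i ((wg s t i) '' B)).ncard := by
    rw [← hbij.image_eq, Set.ncard_image_of_injOn (wwi.injOn)]
  have hsplit : (NP t B \ DstOf s t i B).ncard + (DstOf s t i B).ncard = (NP t B).ncard :=
    Set.ncard_diff_add_ncard_of_subset (dstOf_subset i B) hfin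
  have hsplit' : (NP t ((wg s t i) '' B) \ DstOf s t i ((wg s t i) '' B)).ncard
      + (DstOf s t i ((wg s t i) '' B)).ncard = (NP t ((wg s t i) '' B)).ncard :=
    Set.ncard_diff_add_ncard_of_subset (dstOf_subset i _) hfin'
  -- identify the card of destroyed pairs for B with DnD
  have hds : (DstOf s t i B).ncard = (DnD s t i B).ncard := by
    rw [dstOf_eq_image ht i B,
      Set.ncard_image_of_injective _ (fun a b h => (Prod.mk.injEq .. ▸ h).1)]
    have himg2 : (fun x : ℤ => x + (t:ℤ)) '' {x | C1 s t i x ∧ x ∉ B ∧ x + t ∈ B}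
        = DnD s t i B := by
      ext y
      simp only [Set.mem_image, Set.mem_setOf_eq, DnD]
      constructor
      · rintro ⟨x, ⟨hc, hx, hxt⟩, rfl⟩
        exact ⟨(c2shift i x).2 hc, hxt, by rwa [show x + (t:ℤ) - t = x by ring]⟩
      · rintro ⟨hc, hy, hyt⟩
        exact ⟨y - t, ⟨(c1shift i y).2 hc, hyt, by rwa [show y - (t:ℤ) + t = y by ring]⟩,
          by ring⟩
    rw [← himg2, Set.ncard_image_of_injective _ (fun a b h => by omega)]
  -- identify the card of destroyed pairs for the image with UpD
  have hds' : (DstOf s t i ((wg s t i) '' B)).ncard = (UpD s t i B).ncard := by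
    rw [dstOf_eq_image ht i _,
      Set.ncard_image_of_injective _ (fun a b h => (Prod.mk.injEq .. ▸ h).1)]
    congr 1
    ext x
    simp only [Set.mem_setOf_eq, UpD]
    constructor
    · rintro ⟨hc, hx, hxt⟩
      rw [wmem i hs hst, wev1 i hc] at hx
      rw [wmem i hs hst] at hxt
      have hxt' : wg s t i (x + t) = x := by
        rw [wev2 i (fun h => c11 i hs hst x hc h) ((c2shift i x).2 hc)]
        ring
      rw [hxt'] at hxt
      exact ⟨hc, hxt, hx⟩
    · rintro ⟨hc, hx, hxt⟩
      refine ⟨hc, ?_, ?_⟩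
      · rw [wmem i hs hst, wev1 i hc]
        exact hxt
      · rw [wmem i hs hst]
        have hxt' : wg s t i (x + t) = x := by
          rw [wev2 i (fun h => c11 i hs hst x hc h) ((c2shift i x).2 hc)]
          ring
        rw [hxt']
        exact hx
  rw [Ninv, Ninv, ← hsplit, ← hsplit', hds, hds', ← hmid]
  push_cast
  ring

end Stmt18
namespace Stmt18

lemma wgen_eq_wg (s t : ℕ) (i : ℤ) : wgen s t i = wg s t i := rfl

variable {s t : ℕ}

lemma wmon_inv (hs : 1 < s) (ht : 1 < t) (hst : Nat.Coprime s t) {u : Function.End ℤ}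
    (hu : u ∈ WMon s t) :
    ∀ B : Set ℤ, Bdd B → Bdd ((u : ℤ → ℤ) '' B) ∧ Ninv s ((u : ℤ → ℤ) '' B) = Ninv s B ∧
      ((Sz ((u : ℤ → ℤ) '' B) : ℤ) - t * Ninv t ((u : ℤ → ℤ) '' B)
        = (Sz B : ℤ) - t * Ninv t B) := by
  induction hu using Submonoid.closure_induction with
  | mem f hf =>
    obtain ⟨i, rfl⟩ := hf
    intro B hB
    rw [wgen_eq_wg]
    refine ⟨wBdd i hs hst hB, gen_ninv_s hs hst i, ?_⟩
    rw [gen_sz hs ht hst i hB, gen_ninv_t hs ht hst i hB]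
    ring
  | one =>
    intro B hB
    have h1 : ((1 : Function.End ℤ) : ℤ → ℤ) '' B = B := by
      show id '' B = B
      exact Set.image_id B
    rw [h1]
    exact ⟨hB, rfl, rfl⟩
  | mul f g hf hg ihf ihg =>
    intro B hB
    have h1 : ((f * g : Function.End ℤ) : ℤ → ℤ) '' B
        = (f : ℤ → ℤ) '' ((g : ℤ → ℤ) '' B) := by
      show (fun x => f (g x)) '' B = _
      ext x
      constructor
      · rintro ⟨b, hb, rfl⟩
        exact ⟨g b, ⟨b, hb, rfl⟩, rfl⟩
      · rintro ⟨_, ⟨b, hb, rfl⟩, rfl⟩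
        exact ⟨b, hb, rfl⟩
    obtain ⟨hg1, hg2, hg3⟩ := ihg B hB
    obtain ⟨hf1, hf2, hf3⟩ := ihf _ hg1
    rw [h1]
    exact ⟨hf1, by rw [hf2, hg2], by rw [hf3, hg3]⟩

end Stmt18


/-- the quantity `|λ| − |core_s(λ)| − |core_t(λ)|` is invariant
under the action of `W_s × W_t` (with `W_s` acting at level `t` and `W_t` at
level `s`, via beta-sets). -/
theorem stmt18 (s t : ℕ) (hs : 1 < s) (ht : 1 < t) (hst : Nat.Coprime s t)
    (u v : Function.End ℤ) (hu : u ∈ WMon s t) (hv : v ∈ WMon t s)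
    (l m : Partition') (hact : m.betaSet = (fun b => u (v b)) '' l.betaSet)
    (cs ct cs' ct' : Partition')
    (h1 : Partition'.HasCore s l cs) (h2 : Partition'.HasCore t l ct)
    (h3 : Partition'.HasCore s m cs') (h4 : Partition'.HasCore t m ct') :
    (l.size : ℤ) - cs.size - ct.size = (m.size : ℤ) - cs'.size - ct'.size := by
  open Stmt18 in
  have hs0 : 0 < s := by omega
  have ht0 : 0 < t := by omega
  have hBl := Stmt18.bdd_betaSet l
  have hvres := Stmt18.wmon_inv ht hs hst.symm hv l.betaSet hBl
  obtain ⟨hv1, hv2, hv3⟩ := hvres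
  have hures := Stmt18.wmon_inv hs ht hst hu ((v : ℤ → ℤ) '' l.betaSet) hv1
  obtain ⟨hu1, hu2, hu3⟩ := hures
  have hact2 : m.betaSet = (u : ℤ → ℤ) '' ((v : ℤ → ℤ) '' l.betaSet) := by
    rw [hact]
    ext x
    constructor
    · rintro ⟨b, hb, rfl⟩
      exact ⟨v b, ⟨b, hb, rfl⟩, rfl⟩
    · rintro ⟨_, ⟨b, hb, rfl⟩, rfl⟩
      exact ⟨b, hb, rfl⟩
  have eq1 := Stmt18.hasCore_size hs0 h1
  have eq2 := Stmt18.hasCore_size ht0 h2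
  have eq3 := Stmt18.hasCore_size hs0 h3
  have eq4 := Stmt18.hasCore_size ht0 h4
  have sz1 := Stmt18.size_eq_sz l
  have sz2 := Stmt18.size_eq_sz m
  rw [hact2] at eq3 eq4 sz2
  have e5 : (s:ℤ) * Stmt18.Ninv s ((u : ℤ → ℤ) '' ((v : ℤ → ℤ) '' l.betaSet))
      = (s:ℤ) * Stmt18.Ninv s ((v : ℤ → ℤ) '' l.betaSet) := by rw [hu2]
  have e6 : (t:ℤ) * Stmt18.Ninv t ((v : ℤ → ℤ) '' l.betaSet)
      = (t:ℤ) * Stmt18.Ninv t l.betaSet := by rw [hv2]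
  linarith [hu3, hv3, e5, e6, eq1, eq2, eq3, eq4, sz1, sz2]
end
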